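/- arXiv:1112.3673 — 4 statements merged into one kernel-verified Lean document; each statement's English description precedes it below -/
import Mathlib

section
/- Let x < y be real numbers and let ω ∈ ℂ. Assume that Re(conj(ω)·u(t)) ≥ 0 for all t ∈ [x, y]. Then, with M := max_{t ∈ [x,y]} |u(t)|, the inequality Re(conj(ω)·u(y)) ≥ Re(conj(ω)·u(x)) + (y − x)·Re(conj(ω)·u'(x)) − C₂·(y − x)·(y − x + 1)·|ω|·M holds. -/
open MeasureTheory Set

/-- Lemma 3.1 (part): for a solution `u` of `-u'' + V u = E u` with the negative
part of `V` uniformly locally `L¹`, if `Re(conj ω · u(t)) ≥ 0` on `[x, y]`, then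
`Re(conj ω · u(y)) ≥ Re(conj ω · u(x)) + (y - x) Re(conj ω · u'(x))
  - C₂ (y-x)(y-x+1) |ω| M` where `M = max_{[x,y]} |u|`. -/
theorem stmt_0
    (V : ℝ → ℝ) (hVmeas : Measurable V)
    (hVloc : LocallyIntegrable V volume)
    (C₁ : ℝ)
    (hC₁ : IsLUB (Set.range fun x : ℝ => ∫ y in x..x + 1, max (-V y) 0) C₁)
    (E : ℂ) (u u' : ℝ → ℂ)
    (hu : ∀ x : ℝ, HasDerivAt u (u' x) x)
    (heq : ∀ a b : ℝ, a ≤ b →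
      u' b - u' a = ∫ t in a..b, ((V t : ℂ) - E) * u t)
    (C₂ : ℝ) (hC₂ : C₂ = C₁ + ‖E‖)
    (x y : ℝ) (hxy : x < y) (ω : ℂ)
    (hpos : ∀ t ∈ Icc x y, 0 ≤ (starRingEnd ℂ ω * u t).re)
    (M : ℝ) (hM : IsGreatest ((fun t => ‖u t‖) '' Icc x y) M) :
    (starRingEnd ℂ ω * u x).re + (y - x) * (starRingEnd ℂ ω * u' x).re
      - C₂ * (y - x) * (y - x + 1) * ‖ω‖ * M
      ≤ (starRingEnd ℂ ω * u y).re := by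
  set w : ℂ := starRingEnd ℂ ω with hw
  have hwabs : ‖w‖ = ‖ω‖ := Complex.norm_conj ω
  have hMle : ∀ t ∈ Icc x y, ‖u t‖ ≤ M := fun t ht => hM.2 ⟨t, ht, rfl⟩
  have hM0 : 0 ≤ M :=
    le_trans (norm_nonneg _) (hMle x (left_mem_Icc.2 hxy.le))
  have hC₁ub : ∀ a : ℝ, (∫ t in a..a + 1, max (-V t) 0) ≤ C₁ := fun a => hC₁.1 ⟨a, rfl⟩
  have hC₁0 : 0 ≤ C₁ := by
    refine le_trans ?_ (hC₁ub 0)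
    exact intervalIntegral.integral_nonneg (by norm_num) fun t _ => le_max_right _ _
  have hE0 : 0 ≤ ‖E‖ := norm_nonneg _
  have hC₂0 : 0 ≤ C₂ := by rw [hC₂]; positivity
  -- integrability facts
  have hVint : ∀ a b : ℝ, IntervalIntegrable V volume a b := fun a b =>
    intervalIntegrable_iff.mpr
      ((hVloc.integrableOn_isCompact isCompact_uIcc).mono_set Set.uIoc_subset_uIcc)
  have hVm : ∀ a b : ℝ, IntervalIntegrable (fun t => max (-V t) 0) volume a b := fun a b =>
    ⟨(hVint a b).1.neg.pos_part, (hVint a b).2.neg.pos_part⟩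
  have hucont : Continuous u := continuous_iff_continuousAt.mpr fun t => (hu t).continuousAt
  have hprod : ∀ a b : ℝ, IntervalIntegrable (fun t => w * (((V t : ℂ) - E) * u t)) volume a b := by
    intro a b
    have h1 : IntervalIntegrable (fun t => (V t : ℂ)) volume a b :=
      ⟨(hVint a b).1.ofReal, (hVint a b).2.ofReal⟩
    have h2 : IntervalIntegrable (fun t => (V t : ℂ) - E) volume a b :=
      h1.sub intervalIntegrable_const
    exact (h2.mul_continuousOn hucont.continuousOn).const_mul w
  have hgint : ∀ a b : ℝ, IntervalIntegrable
      (fun t => (w * (((V t : ℂ) - E) * u t)).re) volume a b := fun a b =>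
    ⟨(hprod a b).1.re, (hprod a b).2.re⟩
  -- the function f and its derivative
  set g : ℝ → ℝ := fun t => (w * (((V t : ℂ) - E) * u t)).re with hg
  set f : ℝ → ℝ := fun t => (w * u t).re with hf
  have hf' : ∀ t : ℝ, HasDerivAt f ((w * u' t).re) t := by
    intro t
    have h1 : HasDerivAt (fun s => w * u s) (w * u' t) t := (hu t).const_mul w
    have h2 := Complex.reCLM.hasFDerivAt.comp_hasDerivAt t h1
    exact h2
  -- the derivative difference formula
  have hdiff : ∀ s : ℝ, x ≤ s →
      (w * u' s).re - (w * u' x).re = ∫ t in x..s, g t := by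
    intro s hs
    have h0 : w * u' s - w * u' x = ∫ t in x..s, w * (((V t : ℂ) - E) * u t) := by
      rw [← mul_sub, heq x s hs, intervalIntegral.integral_const_mul]
    have h1 : (w * u' s).re - (w * u' x).re = (w * u' s - w * u' x).re := by
      simp [Complex.sub_re]
    rw [h1, h0]
    rw [intervalIntegral.integral_of_le hs, intervalIntegral.integral_of_le hs]
    exact (integral_re (hprod x s).1).symm
  -- bound on integral of the negative part of V
  have hVmb : ∀ s ∈ Icc x y, (∫ t in x..s, max (-V t) 0) ≤ C₁ * (y - x + 1) := by
    intro s hs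
    set n : ℕ := ⌈y - x⌉₊ with hn
    have hsn : s ≤ x + n := by
      have := Nat.le_ceil (y - x)
      have h2 := hs.2
      push_cast
      linarith
    have step : ∀ m : ℕ, (∫ t in x..x + m, max (-V t) 0) ≤ C₁ * m := by
      intro m
      induction m with
      | zero => simp
      | succ k ih =>
        have hlast : (∫ t in (x + k : ℝ)..(x + (k:ℝ) + 1), max (-V t) 0) ≤ C₁ :=
          hC₁ub (x + k)
        have hsplit := intervalIntegral.integral_add_adjacent_intervals
          (hVm x (x + k)) (hVm (x + k) (x + (k:ℝ) + 1))
        push_cast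
        rw [show x + ((k:ℝ) + 1) = x + (k:ℝ) + 1 by ring, ← hsplit]
        linarith
    have hmono : (∫ t in x..s, max (-V t) 0) ≤ ∫ t in x..x + n, max (-V t) 0 := by
      have hadd : (∫ t in x..x + n, max (-V t) 0)
          = (∫ t in x..s, max (-V t) 0) + ∫ t in s..x + n, max (-V t) 0 :=
        (intervalIntegral.integral_add_adjacent_intervals (hVm _ _) (hVm _ _)).symm
      have hnn : 0 ≤ ∫ t in s..x + n, max (-V t) 0 :=
        intervalIntegral.integral_nonneg hsn fun t _ => le_max_right _ _
      linarith
    have hnle : (n : ℝ) ≤ y - x + 1 := (Nat.ceil_lt_add_one (by linarith : (0:ℝ) ≤ y - x)).le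
    calc (∫ t in x..s, max (-V t) 0) ≤ C₁ * n := hmono.trans (step n)
      _ ≤ C₁ * (y - x + 1) := by nlinarith
  -- pointwise lower bound on g
  set K : ℝ := ‖ω‖ * M with hK
  have hK0 : 0 ≤ K := mul_nonneg (norm_nonneg _) hM0
  have hg_lb : ∀ t ∈ Icc x y, -((max (-V t) 0 + ‖E‖) * K) ≤ g t := by
    intro t ht
    have hsplit : g t = V t * (w * u t).re - (w * (E * u t)).re := by
      have h1 : w * (((V t : ℂ) - E) * u t) = (V t : ℂ) * (w * u t) - w * (E * u t) := by ring
      rw [hg]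
      simp only [h1, Complex.sub_re, Complex.re_ofReal_mul]
    have hre0 : 0 ≤ (w * u t).re := hpos t ht
    have hreK : (w * u t).re ≤ K := by
      calc (w * u t).re ≤ ‖w * u t‖ := Complex.re_le_norm _
        _ = ‖ω‖ * ‖u t‖ := by rw [norm_mul, hwabs]
        _ ≤ K := by rw [hK]; exact mul_le_mul_of_nonneg_left (hMle t ht) (norm_nonneg _)
    have h2 : -(max (-V t) 0) * (w * u t).re ≤ V t * (w * u t).re := by
      have : -(max (-V t) 0) ≤ V t := by
        rcases le_max_iff.mp (le_refl (max (-V t) 0)) with _ | _ <;>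
          simp [neg_le, le_max_iff] <;> linarith [le_max_left (-V t) 0]
      exact mul_le_mul_of_nonneg_right this hre0
    have h3 : -(max (-V t) 0) * K ≤ -(max (-V t) 0) * (w * u t).re := by
      have hnp : -(max (-V t) 0) ≤ 0 := neg_nonpos.mpr (le_max_right _ _)
      exact mul_le_mul_of_nonpos_left hreK hnp
    have h4 : (w * (E * u t)).re ≤ ‖E‖ * K := by
      calc (w * (E * u t)).re ≤ ‖w * (E * u t)‖ := Complex.re_le_norm _
        _ = ‖ω‖ * (‖E‖ * ‖u t‖) := by
            rw [norm_mul, norm_mul, hwabs]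
        _ ≤ ‖E‖ * K := by
            rw [hK]
            have := mul_le_mul_of_nonneg_left (hMle t ht) (norm_nonneg ω)
            nlinarith [norm_nonneg ω, hE0]
    rw [hsplit]
    linarith
  -- lower bound on the integral of g
  set B : ℝ := C₂ * (y - x + 1) * K with hB
  have hB0 : 0 ≤ B := mul_nonneg (mul_nonneg hC₂0 (by linarith)) hK0
  have hint_lb : ∀ s ∈ Icc x y, -B ≤ ∫ t in x..s, g t := by
    intro s hs
    have hlbint : IntervalIntegrable
        (fun t => -((max (-V t) 0 + ‖E‖) * K)) volume x s :=
      (((hVm x s).add intervalIntegrable_const).mul_const K).neg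
    have hmono : (∫ t in x..s, -((max (-V t) 0 + ‖E‖) * K)) ≤ ∫ t in x..s, g t :=
      intervalIntegral.integral_mono_on hs.1 hlbint (hgint x s)
        (fun t ht => hg_lb t ⟨ht.1, ht.2.trans hs.2⟩)
    have hcomp : (∫ t in x..s, -((max (-V t) 0 + ‖E‖) * K))
        = -(((∫ t in x..s, max (-V t) 0) + ‖E‖ * (s - x)) * K) := by
      rw [intervalIntegral.integral_neg, intervalIntegral.integral_mul_const,
        intervalIntegral.integral_add (hVm x s) intervalIntegrable_const,
        intervalIntegral.integral_const]
      simp only [smul_eq_mul]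
      ring
    rw [hcomp] at hmono
    refine le_trans ?_ hmono
    have hVb := hVmb s hs
    have hsx : s - x ≤ y - x + 1 := by linarith [hs.2]
    have hI0 : 0 ≤ ∫ t in x..s, max (-V t) 0 :=
      intervalIntegral.integral_nonneg hs.1 fun t _ => le_max_right _ _
    rw [hB, hC₂]
    nlinarith [mul_le_mul_of_nonneg_right hVb hK0,
      mul_le_mul_of_nonneg_right (mul_le_mul_of_nonneg_left hsx hE0) hK0]
  -- monotone auxiliary function
  set F : ℝ → ℝ := fun s => f s - (s - x) * (w * u' x).re + B * (s - x) with hF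
  have hF' : ∀ s : ℝ, HasDerivAt F ((w * u' s).re - (w * u' x).re + B) s := by
    intro s
    have h1 : HasDerivAt (fun s : ℝ => (s - x) * (w * u' x).re) ((w * u' x).re) s := by
      simpa using ((hasDerivAt_id s).sub_const x).mul_const ((w * u' x).re)
    have h2 : HasDerivAt (fun s : ℝ => B * (s - x)) B s := by
      simpa using ((hasDerivAt_id s).sub_const x).const_mul B
    exact ((hf' s).sub h1).add h2
  have hmonoF : MonotoneOn F (Icc x y) := by
    apply monotoneOn_of_deriv_nonneg (convex_Icc x y)
    · exact fun s _ => (hF' s).continuousAt.continuousWithinAt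
    · intro s _
      exact (hF' s).differentiableAt.differentiableWithinAt
    · intro s hs
      rw [interior_Icc] at hs
      rw [(hF' s).deriv]
      have h1 := hdiff s hs.1.le
      have h2 := hint_lb s ⟨hs.1.le, hs.2.le⟩
      rw [← h1] at h2
      linarith
  have hfin := hmonoF (left_mem_Icc.2 hxy.le) (right_mem_Icc.2 hxy.le) hxy.le
  have hBe : B * (y - x) = C₂ * (y - x) * (y - x + 1) * ‖ω‖ * M := by
    rw [hB, hK]; ring
  simp only [hF, sub_self, zero_mul, mul_zero, sub_zero, add_zero] at hfin
  show f x + (y - x) * (w * u' x).re - C₂ * (y - x) * (y - x + 1) * ‖ω‖ * M ≤ f y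
  linarith
end

section
/- For every x ∈ ℝ, |u'(x)| ≤ C · max_{y ∈ [x − K, x + K]} |u(y)|, where C := C₂ + 2·√C₂ and K := 1/√C₂. -/
open MeasureTheory Set intervalIntegral

private lemma vm_intble (V : ℝ → ℝ) (hVmeas : Measurable V)
    (hVloc : LocallyIntegrable V volume) (a b : ℝ) :
    IntervalIntegrable (fun y => max (-V y) 0) volume a b := by
  have h1 : IntervalIntegrable V volume a b :=
    (hVloc.integrableOn_isCompact isCompact_uIcc).intervalIntegrable
  refine h1.mono_fun ?_ ?_
  · exact ((hVmeas.neg.max measurable_const).aestronglyMeasurable)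
  · filter_upwards with y
    simp only [Real.norm_eq_abs]
    rw [abs_of_nonneg (le_max_right _ _)]
    exact max_le (neg_abs_le (V y) |>.trans (le_abs_self _) |>.trans (le_refl _) |> fun h => (neg_le_abs (V y))) (abs_nonneg _)

private lemma window (V : ℝ → ℝ) (hVmeas : Measurable V)
    (hVloc : LocallyIntegrable V volume) (C₁ : ℝ)
    (hC₁ : IsLUB (Set.range fun x : ℝ => ∫ y in x..x + 1, max (-V y) 0) C₁)
    (a b : ℝ) (hab : a ≤ b) :
    (∫ y in a..b, max (-V y) 0) ≤ (b - a + 1) * C₁ := by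
  have hub : ∀ p : ℝ, (∫ y in p..p + 1, max (-V y) 0) ≤ C₁ := fun p => hC₁.1 ⟨p, rfl⟩
  have hC₁0 : 0 ≤ C₁ := le_trans
    (intervalIntegral.integral_nonneg (by norm_num) (fun y _ => le_max_right _ _)) (hub 0)
  set n := ⌈b - a⌉₊ with hn
  have hbn : b ≤ a + n := by
    have := Nat.le_ceil (b - a)
    linarith
  have hint := vm_intble V hVmeas hVloc
  have hsplit : (∫ y in a..(a + n : ℝ), max (-V y) 0)
      = ∑ k ∈ Finset.range n, ∫ y in (a + k : ℝ)..(a + (k+1) : ℝ), max (-V y) 0 := by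
    have := intervalIntegral.sum_integral_adjacent_intervals (a := fun k : ℕ => a + k)
      (μ := volume) (f := fun y => max (-V y) 0) (n := n) (fun k _ => hint _ _)
    simp only [Nat.cast_zero, add_zero, Nat.cast_add, Nat.cast_one] at this
    rw [← this]
  have h1 : (∫ y in a..b, max (-V y) 0) ≤ ∫ y in a..(a + n : ℝ), max (-V y) 0 := by
    rw [← intervalIntegral.integral_add_adjacent_intervals (hint a b) (hint b (a + n))]
    have : 0 ≤ ∫ y in b..(a + n : ℝ), max (-V y) 0 :=
      intervalIntegral.integral_nonneg hbn (fun y _ => le_max_right _ _)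
    linarith
  have h2 : ∑ k ∈ Finset.range n, (∫ y in (a + k : ℝ)..(a + (k+1) : ℝ), max (-V y) 0)
      ≤ (n : ℝ) * C₁ := by
    calc ∑ k ∈ Finset.range n, (∫ y in (a + k : ℝ)..(a + (k+1) : ℝ), max (-V y) 0)
        ≤ ∑ _k ∈ Finset.range n, C₁ := by
          refine Finset.sum_le_sum (fun k _ => ?_)
          have := hub (a + k)
          have he : (a + ((k:ℝ)+1)) = (a + k) + 1 := by ring
          rw [he]
          exact this
      _ = (n : ℝ) * C₁ := by simp [mul_comm]
  have h3 : (n : ℝ) ≤ b - a + 1 := le_of_lt (Nat.ceil_lt_add_one (by linarith))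
  calc (∫ y in a..b, max (-V y) 0) ≤ (n : ℝ) * C₁ := by rw [hsplit] at h1; linarith
    _ ≤ (b - a + 1) * C₁ := mul_le_mul_of_nonneg_right h3 hC₁0

set_option maxHeartbeats 1000000 in
private lemma core (V : ℝ → ℝ) (hVmeas : Measurable V) (E : ℂ) (u u' : ℝ → ℂ) (x C₁ hh K M : ℝ) (c : ℂ)
    (hu : ∀ t, HasDerivAt u (u' t) t)
    (heq : ∀ a b : ℝ, a ≤ b → u' b - u' a = ∫ t in a..b, ((V t : ℂ) - E) * u t)
    (hint : ∀ a b : ℝ, IntervalIntegrable (fun t => ((V t : ℂ) - E) * u t) volume a b)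
    (hvmint : ∀ a b : ℝ, IntervalIntegrable (fun t => max (-V t) 0) volume a b)
    (hwin : ∀ s : ℝ, x ≤ s → s ≤ x + K → (∫ t in x..s, max (-V t) 0) ≤ (s - x + 1) * C₁)
    (hC₁0 : 0 ≤ C₁)
    (hhh : hh = Real.sqrt (C₁ + ‖E‖)) (hhpos : 0 < hh)
    (hK : K = 1 / hh)
    (hM : ∀ t ∈ Icc x (x + K), ‖u t‖ ≤ M) (hMpos : 0 < M)
    (hc : ‖c‖ = 1)
    (hvx : 0 ≤ (c * u x).re)
    (hA : (C₁ + ‖E‖ + 2 * hh) * M < (c * u' x).re) : False := by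
  set Ea := ‖E‖ with hEa
  have hEa0 : 0 ≤ Ea := norm_nonneg E
  have hh2 : hh ^ 2 = C₁ + Ea := by
    rw [hhh]; exact Real.sq_sqrt (by positivity)
  have hKpos : 0 < K := by rw [hK]; positivity
  have hhK : hh * K = 1 := by rw [hK]; field_simp
  have hC₂K : (C₁ + Ea) * K = hh := by
    rw [← hh2]; nlinarith [hhK]
  set v : ℝ → ℝ := fun t => (c * u t).re with hv
  set w : ℝ → ℝ := fun t => (c * u' t).re with hw
  have hvderiv : ∀ t, HasDerivAt v (w t) t := by
    intro t
    exact Complex.reCLM.hasFDerivAt.comp_hasDerivAt t ((hu t).const_mul c)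
  have vcont : Continuous v := by
    rw [continuous_iff_continuousAt]; exact fun t => (hvderiv t).continuousAt
  have u'cont : Continuous u' := by
    have hrep : u' = fun b => u' x + ∫ t in x..b, ((V t : ℂ) - E) * u t := by
      funext b
      rcases le_total x b with hxb | hbx
      · have := heq x b hxb; linear_combination this
      · have := heq b x hbx
        rw [intervalIntegral.integral_symm]
        linear_combination -this
    rw [hrep]
    exact continuous_const.add (intervalIntegral.continuous_primitive hint x)
  have wcont : Continuous w := Complex.continuous_re.comp (continuous_const.mul u'cont)
  have hvabs : ∀ t ∈ Icc x (x + K), v t ≤ M := by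
    intro t ht
    calc v t ≤ ‖c * u t‖ := Complex.re_le_norm _
      _ = ‖u t‖ := by rw [norm_mul, hc, one_mul]
      _ ≤ M := hM t ht
  set ε := (c * u' x).re - (C₁ + Ea + 2 * hh) * M with hεdef
  have hεpos : 0 < ε := by simp only [hεdef]; linarith
  set θ := (Ea + hh) * M + ε / 2 with hθdef
  have hθpos : 0 < θ := by positivity
  set G := {t : ℝ | t ∈ Icc x (x + K) ∧ ∀ s ∈ Icc x t, v x + θ * (s - x) ≤ v s} with hG
  have hxG : x ∈ G := by
    refine ⟨⟨le_refl x, by linarith⟩, fun s hs => ?_⟩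
    have : s = x := le_antisymm hs.2 hs.1
    simp [this]
  have hGbd : BddAbove G := ⟨x + K, fun t ht => ht.1.2⟩
  set T := sSup G with hT
  have hxT : x ≤ T := le_csSup hGbd hxG
  have hTK : T ≤ x + K := csSup_le ⟨x, hxG⟩ (fun t ht => ht.1.2)
  have hlt_case : ∀ s, x ≤ s → s < T → v x + θ * (s - x) ≤ v s := by
    intro s hxs hsT
    obtain ⟨t, htG, hst⟩ := exists_lt_of_lt_csSup ⟨x, hxG⟩ hsT
    exact htG.2 s ⟨hxs, le_of_lt hst⟩
  have hTG : T ∈ G := by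
    refine ⟨⟨hxT, hTK⟩, fun s hs => ?_⟩
    rcases lt_or_eq_of_le hs.2 with hsT | hsT
    · exact hlt_case s hs.1 hsT
    · rw [hsT]
      rcases eq_or_lt_of_le hxT with hxTe | hxTe
      · simp [← hxTe]
      · have hclosed : IsClosed {r : ℝ | v x + θ * (r - x) ≤ v r} :=
          isClosed_le (by fun_prop) vcont
        have hsub : Ico x T ⊆ {r : ℝ | v x + θ * (r - x) ≤ v r} :=
          fun r hr => hlt_case r hr.1 hr.2
        have hTcl : T ∈ closure (Ico x T) := by
          rw [closure_Ico (ne_of_lt hxTe)]; exact ⟨hxT, le_refl T⟩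
        exact hclosed.closure_subset_iff.mpr hsub hTcl
  -- derivative lower bound on the good prefix
  have hwlow : ∀ s ∈ Icc x T, θ + ε / 2 ≤ w s := by
    intro s hs
    have hsK : s ≤ x + K := le_trans hs.2 hTK
    have hbdd : ∀ t ∈ Icc x s, 0 ≤ v t ∧ v t ≤ M := by
      intro t ht
      have htT : t ∈ Icc x T := ⟨ht.1, le_trans ht.2 hs.2⟩
      have h1 := hTG.2 t htT
      constructor
      · nlinarith [h1, hθpos, ht.1, hvx]
      · exact hvabs t ⟨ht.1, le_trans ht.2 hsK⟩
    have hkey : w s - w x = ∫ t in x..s, (c * (((V t : ℂ) - E) * u t)).re := by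
      have h1 := heq x s hs.1
      have h2 : (∫ t in x..s, c * (((V t : ℂ) - E) * u t))
          = c * ∫ t in x..s, ((V t : ℂ) - E) * u t :=
        intervalIntegral.integral_const_mul c _
      have h3 : (∫ t in x..s, (c * (((V t : ℂ) - E) * u t)).re)
          = (∫ t in x..s, c * (((V t : ℂ) - E) * u t)).re := by
        have := Complex.reCLM.intervalIntegral_comp_comm ((hint x s).const_mul c)
        exact this
      rw [h3, h2, ← h1]
      simp [hw, mul_sub]
    have hptwise : ∀ t ∈ Icc x s,
        -((max (-V t) 0 + Ea) * M) ≤ (c * (((V t : ℂ) - E) * u t)).re := by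
      intro t ht
      have hb := hbdd t ht
      have habs : ‖u t‖ ≤ M := hM t ⟨ht.1, le_trans ht.2 hsK⟩
      have hexp : (c * (((V t : ℂ) - E) * u t)).re = V t * v t - (E * (c * u t)).re := by
        have : c * (((V t : ℂ) - E) * u t) = (V t : ℂ) * (c * u t) - E * (c * u t) := by ring
        rw [this, Complex.sub_re, Complex.re_ofReal_mul]
      rw [hexp]
      have h1 : -(max (-V t) 0) * M ≤ V t * v t := by
        rcases le_or_gt 0 (V t) with hV | hV
        · have : max (-V t) 0 = 0 := max_eq_right (by linarith)
          rw [this]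
          simp only [neg_zero, zero_mul]
          exact mul_nonneg hV hb.1
        · have : max (-V t) 0 = -V t := max_eq_left (by linarith)
          rw [this]
          have : V t * M ≤ V t * v t := mul_le_mul_of_nonpos_left hb.2 (le_of_lt hV)
          nlinarith
      have h2 : (E * (c * u t)).re ≤ Ea * M := by
        calc (E * (c * u t)).re ≤ ‖E * (c * u t)‖ := Complex.re_le_norm _
          _ = Ea * ‖u t‖ := by rw [norm_mul, norm_mul, hc, one_mul]
          _ ≤ Ea * M := mul_le_mul_of_nonneg_left habs hEa0
      nlinarith
    have hIf : IntervalIntegrable (fun t => (c * (((V t : ℂ) - E) * u t)).re) volume x s := by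
      have h0 : IntervalIntegrable (fun t => c * (((V t : ℂ) - E) * u t)) volume x s :=
        (hint x s).const_mul c
      have hucont : Continuous u := by
        rw [continuous_iff_continuousAt]; exact fun t => (hu t).continuousAt
      have hmeas : Measurable (fun t => (c * (((V t : ℂ) - E) * u t)).re) := by
        apply Complex.measurable_re.comp
        exact (measurable_const.mul (((Complex.measurable_ofReal.comp hVmeas).sub
          measurable_const).mul hucont.measurable))
      refine h0.mono_fun ?_ ?_
      · exact hmeas.aestronglyMeasurable
      · filter_upwards with t
        simp only [Real.norm_eq_abs]
        exact (Complex.abs_re_le_norm _)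
    have hIg : IntervalIntegrable (fun t => -((max (-V t) 0 + Ea) * M)) volume x s := by
      have := ((hvmint x s).add (_root_.intervalIntegrable_const (c := Ea))).mul_const M
      exact this.neg
    have hmono := intervalIntegral.integral_mono_on hs.1 hIg hIf hptwise
    have hrhs : (∫ t in x..s, -((max (-V t) 0 + Ea) * M)) =
        -(((∫ t in x..s, max (-V t) 0) + Ea * (s - x)) * M) := by
      rw [intervalIntegral.integral_neg]
      congr 1
      rw [intervalIntegral.integral_mul_const]
      congr 1
      rw [intervalIntegral.integral_add (hvmint x s) (_root_.intervalIntegrable_const (c := Ea))]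
      simp [mul_comm]
    have hwinb : (∫ t in x..s, max (-V t) 0) ≤ (s - x + 1) * C₁ := hwin s hs.1 hsK
    have hsx : s - x ≤ K := by linarith
    have hfinal : -((C₁ + hh) * M) ≤ w s - w x := by
      rw [hkey] at *
      have hEb : ((∫ t in x..s, max (-V t) 0) + Ea * (s - x)) ≤ C₁ + hh := by
        have h4 : (s - x + 1) * C₁ + Ea * (s - x) ≤ C₁ + (C₁ + Ea) * K := by nlinarith
        rw [hC₂K] at h4
        linarith
      have h5 : -(((∫ t in x..s, max (-V t) 0) + Ea * (s - x)) * M) ≥ -((C₁ + hh) * M) := by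
        nlinarith
      rw [hrhs] at hmono
      linarith
    have hwx : w x = (C₁ + Ea + 2 * hh) * M + ε := by simp only [hεdef, hw]; ring
    rw [hwx] at hfinal
    simp only [hθdef]
    nlinarith
  -- T must be x + K
  have hTeq : T = x + K := by
    by_contra hne
    have hTlt : T < x + K := lt_of_le_of_ne hTK hne
    have hwT : θ < w T :=
      lt_of_lt_of_le (lt_add_of_pos_right θ (half_pos hεpos)) (hwlow T ⟨hxT, le_refl T⟩)
    have hopen : IsOpen {r : ℝ | θ < w r} := isOpen_lt continuous_const wcont
    obtain ⟨δ₀, hδ₀pos, hball⟩ := Metric.isOpen_iff.mp hopen T hwT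
    set δ := min (δ₀ / 2) (x + K - T) with hδdef
    have hδpos : 0 < δ := lt_min (by linarith) (by linarith)
    have htG : T + δ ∈ G := by
      refine ⟨⟨by linarith, by have := min_le_right (δ₀/2) (x + K - T); linarith⟩,
        fun s hs => ?_⟩
      rcases le_or_gt s T with hsT | hsT
      · exact hTG.2 s ⟨hs.1, hsT⟩
      · obtain ⟨ξ, hξ, hslope⟩ := exists_hasDerivAt_eq_slope v w hsT
          vcont.continuousOn (fun r _ => hvderiv r)
        have hξball : ξ ∈ Metric.ball T δ₀ := by
          rw [Metric.mem_ball, Real.dist_eq]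
          have h1 : ξ - T < δ := by
            have := hξ.2
            have := hs.2
            have := min_le_left (δ₀/2) (x + K - T)
            linarith
          rw [abs_of_pos (by linarith [hξ.1])]
          have := min_le_left (δ₀/2) (x + K - T)
          linarith
        have hwξ : θ < w ξ := hball hξball
        have hne2 : s - T ≠ 0 := ne_of_gt (by linarith)
        rw [eq_div_iff hne2] at hslope
        have hvT := hTG.2 T ⟨hxT, le_refl T⟩
        nlinarith [mul_pos (sub_pos.mpr hwξ) (sub_pos.mpr hsT), hslope, hvT]
    have : T + δ ≤ T := le_csSup hGbd htG
    linarith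
  -- contradiction
  have hfin := hTG.2 (x + K) (by rw [hTeq]; exact ⟨by linarith, le_refl _⟩)
  have hvK : v (x + K) ≤ M := hvabs (x + K) ⟨by linarith, le_refl _⟩
  have hθK : θ * K = Ea * K * M + M + ε * K / 2 := by
    have : hh * K * M = M := by rw [hhK]; ring
    nlinarith [hhK]
  simp only [add_sub_cancel_left] at hfin
  have h10 : 0 ≤ Ea * K * M := mul_nonneg (mul_nonneg hEa0 (le_of_lt hKpos)) (le_of_lt hMpos)
  have h11 : 0 < ε * K := mul_pos hεpos hKpos
  have hvx' : 0 ≤ v x := hvx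
  have h12 : hh * K * M = M := by rw [hhK]; ring
  clear_value T G v w ε θ Ea
  nlinarith [hfin, hvK, hvx', hθK, h10, h11, h12]

set_option maxHeartbeats 1000000 in
/-- Theorem 1.1(i): `|u'(x)| ≤ C · max_{y ∈ [x-K, x+K]} |u(y)|`
with `C = C₂ + 2√C₂` and `K = 1/√C₂`. -/
theorem stmt_2
    (V : ℝ → ℝ) (hVmeas : Measurable V)
    (hVloc : LocallyIntegrable V volume)
    (C₁ : ℝ)
    (hC₁ : IsLUB (Set.range fun x : ℝ => ∫ y in x..x + 1, max (-V y) 0) C₁)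
    (E : ℂ) (u u' : ℝ → ℂ)
    (hu : ∀ x : ℝ, HasDerivAt u (u' x) x)
    (heq : ∀ a b : ℝ, a ≤ b →
      u' b - u' a = ∫ t in a..b, ((V t : ℂ) - E) * u t)
    (C₂ : ℝ) (hC₂ : C₂ = C₁ + ‖E‖) (hC₂pos : 0 < C₂)
    (C K : ℝ) (hC : C = C₂ + 2 * Real.sqrt C₂) (hK : K = 1 / Real.sqrt C₂)
    (x : ℝ) (M : ℝ)
    (hM : IsGreatest ((fun t => ‖u t‖) '' Icc (x - K) (x + K)) M) :
    ‖u' x‖ ≤ C * M := by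
  have hC₁0 : 0 ≤ C₁ := by
    refine le_trans ?_ (hC₁.1 ⟨0, rfl⟩)
    exact intervalIntegral.integral_nonneg (by norm_num) (fun y _ => le_max_right _ _)
  set hh := Real.sqrt C₂ with hhh
  have hhpos : 0 < hh := Real.sqrt_pos.mpr hC₂pos
  have hKpos : 0 < K := by rw [hK]; positivity
  have hMub : ∀ t ∈ Icc (x - K) (x + K), ‖u t‖ ≤ M :=
    fun t ht => hM.2 ⟨t, ht, rfl⟩
  have hM0 : 0 ≤ M :=
    le_trans (norm_nonneg _) (hMub x ⟨by linarith, by linarith⟩)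
  have hCpos : 0 < C := by rw [hC]; positivity
  by_contra hcon
  push_neg at hcon
  -- M = 0 case
  rcases eq_or_lt_of_le hM0 with hM0' | hMpos
  · have hu0 : ∀ t ∈ Icc (x - K) (x + K), u t = 0 := by
      intro t ht
      have := hMub t ht
      rw [← hM0'] at this
      exact norm_eq_zero.mp (le_antisymm this (norm_nonneg _))
    have hev : u =ᶠ[nhds x] (fun _ => (0 : ℂ)) := by
      have hmem : Ioo (x - K) (x + K) ∈ nhds x :=
        Ioo_mem_nhds (by linarith) (by linarith)
      filter_upwards [hmem] with t ht
      exact hu0 t ⟨le_of_lt ht.1, le_of_lt ht.2⟩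
    have : HasDerivAt (fun _ : ℝ => (0 : ℂ)) (u' x) x := (hu x).congr_of_eventuallyEq hev.symm
    have h0 : u' x = 0 := by
      have h2 : HasDerivAt (fun _ : ℝ => (0 : ℂ)) 0 x := hasDerivAt_const x 0
      exact (this.unique h2)
    rw [h0, ← hM0'] at hcon
    simp at hcon
  -- main case
  set A := ‖u' x‖ with hA
  have hApos : 0 < A := lt_of_le_of_lt (by positivity) hcon
  have hune : u' x ≠ 0 := by
    intro h0
    have h1 : A = 0 := by rw [hA, h0, norm_zero]
    rw [h1] at hApos
    exact lt_irrefl 0 hApos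
  set c : ℂ := (A : ℂ) / u' x with hcdef
  have hc : ‖c‖ = 1 := by
    rw [hcdef, norm_div, Complex.norm_real, Real.norm_eq_abs, abs_of_pos hApos, ← hA, div_self (ne_of_gt hApos)]
  have hcu : c * u' x = (A : ℂ) := by
    rw [hcdef]; field_simp
  have hcure : (c * u' x).re = A := by rw [hcu, Complex.ofReal_re]
  -- integrability facts
  have hucont : Continuous u := by
    rw [continuous_iff_continuousAt]; exact fun t => (hu t).continuousAt
  have hint : ∀ a b : ℝ, IntervalIntegrable (fun t => ((V t : ℂ) - E) * u t) volume a b := by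
    intro a b
    have h2 : IntegrableOn V (uIcc a b) volume := hVloc.integrableOn_isCompact isCompact_uIcc
    have h2' : IntegrableOn (fun t => (V t : ℂ)) (uIcc a b) volume :=
      MeasureTheory.Integrable.ofReal h2
    have h1 : IntervalIntegrable (fun t => (V t : ℂ)) volume a b := h2'.intervalIntegrable
    have h3 : IntervalIntegrable (fun t => (V t : ℂ) - E) volume a b :=
      h1.sub (_root_.intervalIntegrable_const (c := E))
    exact h3.mul_continuousOn hucont.continuousOn
  have hvmint := vm_intble V hVmeas hVloc
  have hwin := window V hVmeas hVloc C₁ hC₁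
  -- case split on sign of (c * u x).re
  have key : False := by
    have hACM : (C₁ + ‖E‖ + 2 * hh) * M < A := by
      calc (C₁ + ‖E‖ + 2 * hh) * M = C * M := by rw [hC, hC₂]
        _ < A := hcon
    rcases le_or_gt 0 ((c * u x).re) with hvx | hvx
    · exact core V hVmeas E u u' x C₁ hh K M c hu heq hint hvmint
        (fun s hxs hsK => hwin x s hxs)
        hC₁0 (by rw [hhh, hC₂]) hhpos hK
        (fun t ht => hMub t ⟨by linarith [ht.1], ht.2⟩) hMpos hc hvx
        (by rw [hcure]; exact hACM)
    · -- reflected case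
      set Vr : ℝ → ℝ := fun t => V (2 * x - t) with hVr
      set ur : ℝ → ℂ := fun t => u (2 * x - t) with hur
      set ur' : ℝ → ℂ := fun t => -u' (2 * x - t) with hur'
      have hur_deriv : ∀ t, HasDerivAt ur (ur' t) t := by
        intro t
        have hg : HasDerivAt (fun s : ℝ => 2 * x - s) (-1) t :=
          (hasDerivAt_id t).const_sub (2 * x)
        have h := HasDerivAt.scomp t (hu (2 * x - t)) hg
        simpa [hur, hur', Function.comp_def] using h
      have hVmeasr : Measurable Vr := hVmeas.comp (measurable_const.sub measurable_id)
      have heqr : ∀ a b : ℝ, a ≤ b →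
          ur' b - ur' a = ∫ t in a..b, ((Vr t : ℂ) - E) * ur t := by
        intro a b hab
        have h1 : ur' b - ur' a = u' (2 * x - a) - u' (2 * x - b) := by
          simp only [hur']; ring
        have h2 := heq (2 * x - b) (2 * x - a) (by linarith)
        have h3 := intervalIntegral.integral_comp_sub_left
          (fun t => ((V t : ℂ) - E) * u t) (2 * x) (a := a) (b := b)
        rw [h1, h2, ← h3]
      have hintr : ∀ a b : ℝ, IntervalIntegrable (fun t => ((Vr t : ℂ) - E) * ur t) volume a b := by
        intro a b
        have := (hint (2 * x - a) (2 * x - b)).comp_sub_left (2 * x)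
        simpa using this
      have hvmintr : ∀ a b : ℝ, IntervalIntegrable (fun t => max (-Vr t) 0) volume a b := by
        intro a b
        have := (hvmint (2 * x - a) (2 * x - b)).comp_sub_left (2 * x)
        simpa using this
      have hwinr : ∀ s : ℝ, x ≤ s → s ≤ x + K →
          (∫ t in x..s, max (-Vr t) 0) ≤ (s - x + 1) * C₁ := by
        intro s hxs hsK
        have h3 := intervalIntegral.integral_comp_sub_left
          (fun t => max (-V t) 0) (2 * x) (a := x) (b := s)
        have h4 := hwin (2 * x - s) (2 * x - x) (by linarith)
        simp only [hVr]
        rw [h3]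
        calc (∫ t in (2 * x - s)..(2 * x - x), max (-V t) 0)
            ≤ (2 * x - x - (2 * x - s) + 1) * C₁ := h4
          _ = (s - x + 1) * C₁ := by ring_nf
      have hMr : ∀ t ∈ Icc x (x + K), ‖ur t‖ ≤ M := by
        intro t ht
        exact hMub (2 * x - t) ⟨by linarith [ht.2], by linarith [ht.1]⟩
      have hvxr : 0 ≤ (-c * ur x).re := by
        have hx2 : (2 : ℝ) * x - x = x := by ring
        simp only [hur, hx2]
        rw [neg_mul, Complex.neg_re]
        linarith
      have hAr : (C₁ + ‖E‖ + 2 * hh) * M < (-c * ur' x).re := by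
        have hx2 : (2 : ℝ) * x - x = x := by ring
        have h5 : (-c) * ur' x = c * u' x := by
          simp only [hur', hx2]; ring
        rw [h5, hcure]
        exact hACM
      exact core Vr hVmeasr E ur ur' x C₁ hh K M (-c) hur_deriv heqr hintr hvmintr hwinr
        hC₁0 (by rw [hhh, hC₂]) hhpos hK hMr hMpos (by rw [norm_neg, hc]) hvxr hAr
  exact key
end

section
/- For every real p with 1 ≤ p < ∞ and every x ∈ ℝ, |u(x)|^p ≤ (2^p/δ) · ∫_{x−δ}^{x+δ} |u(y)|^p dy, where δ := −1/2 + √(1/4 + 1/(2·C₂)). -/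
open MeasureTheory Set

/-- If `g z = M²`, `g` doesn't decrease too fast while nonnegative, then `g d ≥ M²/2`. -/
lemma core_aux (g g' : ℝ → ℝ) (z d M B : ℝ)
    (hzd : z ≤ d)
    (hg : ∀ y, HasDerivAt g (g' y) y)
    (hg'int : IntervalIntegrable g' volume z d)
    (hgz : g z = M ^ 2)
    (hMpos : 0 < M)
    (hB : 0 ≤ B) (hBhalf : B * (d - z) ≤ 1 / 2)
    (hgrow : ∀ s ∈ Icc z d, (∀ t ∈ Icc z s, 0 ≤ g t) → -(M ^ 2 * B) ≤ g' s) :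
    M ^ 2 / 2 ≤ g d := by
  have hM2 : (0:ℝ) < M ^ 2 := by positivity
  have hgc : Continuous g := by
    rw [continuous_iff_continuousAt]; exact fun y => (hg y).continuousAt
  have hP : ∀ y ∈ Icc z d, (∀ t ∈ Icc z y, 0 ≤ g t) → M ^ 2 / 2 ≤ g y := by
    intro y hy hpos
    have hzy : z ≤ y := hy.1
    have h1 : ∀ s ∈ Icc z y, -(M ^ 2 * B) ≤ g' s := fun s hs =>
      hgrow s ⟨hs.1, hs.2.trans hy.2⟩ (fun t ht => hpos t ⟨ht.1, ht.2.trans hs.2⟩)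
    have hint : IntervalIntegrable g' volume z y :=
      hg'int.mono_set (by rw [uIcc_of_le hzy, uIcc_of_le hzd]; exact Icc_subset_Icc le_rfl hy.2)
    have hftc : ∫ s in z..y, g' s = g y - g z :=
      intervalIntegral.integral_eq_sub_of_hasDerivAt (fun t _ => hg t) hint
    have hmono : ∫ _ in z..y, (-(M ^ 2 * B)) ≤ ∫ s in z..y, g' s :=
      intervalIntegral.integral_mono_on hzy intervalIntegrable_const hint h1
    rw [intervalIntegral.integral_const, hftc, hgz, smul_eq_mul] at hmono
    have h2 : B * (y - z) ≤ 1 / 2 :=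
      le_trans (mul_le_mul_of_nonneg_left (by linarith [hy.2] : y - z ≤ d - z) hB) hBhalf
    nlinarith [mul_le_mul_of_nonneg_left h2 (le_of_lt hM2)]
  have hnn : ∀ y ∈ Icc z d, 0 ≤ g y := by
    by_contra hcon
    push_neg at hcon
    obtain ⟨y₀, hy₀, hy₀neg⟩ := hcon
    set Z : Set ℝ := {y | y ∈ Icc z d ∧ g y ≤ 0} with hZ
    have hZne : Z.Nonempty := ⟨y₀, hy₀, le_of_lt hy₀neg⟩
    have hZclosed : IsClosed Z := by
      have : Z = Icc z d ∩ g ⁻¹' (Iic 0) := rfl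
      rw [this]; exact isClosed_Icc.inter (isClosed_Iic.preimage hgc)
    have hZbdd : BddBelow Z := ⟨z, fun y hy => hy.1.1⟩
    set y₁ := sInf Z with hy₁
    have hy₁Z : y₁ ∈ Z := hZclosed.csInf_mem hZne hZbdd
    have hy₁z : z < y₁ := by
      rcases lt_or_eq_of_le hy₁Z.1.1 with h | h
      · exact h
      · exact absurd hy₁Z.2 (not_le.mpr (by rw [← h, hgz]; exact hM2))
    have hIco : ∀ t ∈ Ico z y₁, 0 ≤ g t := by
      intro t ht
      by_contra hneg
      push_neg at hneg
      have : t ∈ Z := ⟨⟨ht.1, le_trans (le_of_lt ht.2) hy₁Z.1.2⟩, le_of_lt hneg⟩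
      exact absurd (csInf_le hZbdd this) (not_le.mpr ht.2)
    have hy₁nn : 0 ≤ g y₁ := by
      have htend : Filter.Tendsto g (nhdsWithin y₁ (Iio y₁)) (nhds (g y₁)) :=
        (hgc.tendsto y₁).mono_left nhdsWithin_le_nhds
      refine ge_of_tendsto htend ?_
      filter_upwards [Ioo_mem_nhdsLT_of_mem (⟨hy₁z, le_rfl⟩ : y₁ ∈ Ioc z y₁)] with s hs
      exact hIco s ⟨le_of_lt hs.1, hs.2⟩
    have hpos : ∀ t ∈ Icc z y₁, 0 ≤ g t := by
      intro t ht
      rcases lt_or_eq_of_le ht.2 with h | h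
      · exact hIco t ⟨ht.1, h⟩
      · rw [h]; exact hy₁nn
    have := hP y₁ hy₁Z.1 hpos
    linarith [hy₁Z.2]
  exact hP d ⟨hzd, le_rfl⟩ hnn

lemma cover_aux (V : ℝ → ℝ) (C₁ δ : ℝ)
    (hC₁ : IsLUB (Set.range fun x : ℝ => ∫ y in x..x + 1, max (-V y) 0) C₁)
    (hVm : ∀ a b : ℝ, IntervalIntegrable (fun t => max (-V t) 0) volume a b)
    (hδ : 0 ≤ δ) (hC₁0 : 0 ≤ C₁) :
    ∀ a b : ℝ, a ≤ b → b - a ≤ δ → ∫ t in a..b, max (-V t) 0 ≤ (δ + 1) * C₁ := by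
  have hub : ∀ x : ℝ, ∫ y in x..x + 1, max (-V y) 0 ≤ C₁ := fun x => hC₁.1 ⟨x, rfl⟩
  have step : ∀ (n : ℕ) (a : ℝ), ∫ t in a..(a + n), max (-V t) 0 ≤ n * C₁ := by
    intro n
    induction n with
    | zero => intro a; simp
    | succ n ih =>
      intro a
      have hsplit : ∫ t in a..(a + (n+1):ℝ), max (-V t) 0
          = (∫ t in a..(a + n:ℝ), max (-V t) 0) + ∫ t in (a + n:ℝ)..(a + (n+1):ℝ), max (-V t) 0 :=
        (intervalIntegral.integral_add_adjacent_intervals (hVm _ _) (hVm _ _)).symm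
      have h2 : ∫ t in (a + n:ℝ)..(a + (n+1):ℝ), max (-V t) 0 ≤ C₁ := by
        have h := hub (a + n)
        rwa [show ((a:ℝ) + n) + 1 = a + ((n:ℝ)+1) by ring] at h
      have h3 := ih a
      push_cast
      rw [hsplit]; linarith
  intro a b hab hlen
  set n := ⌈δ⌉₊ with hn
  have hbn : b ≤ a + n := by
    have : δ ≤ n := Nat.le_ceil δ
    linarith
  have h1 : ∫ t in a..b, max (-V t) 0 ≤ ∫ t in a..(a + n:ℝ), max (-V t) 0 := by
    apply intervalIntegral.integral_mono_interval le_rfl hab hbn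
    · filter_upwards with t; exact le_max_right _ _
    · exact hVm _ _
  have h2 : (n:ℝ) ≤ δ + 1 := le_of_lt (Nat.ceil_lt_add_one hδ)
  calc ∫ t in a..b, max (-V t) 0 ≤ (n:ℝ) * C₁ := h1.trans (step n a)
    _ ≤ (δ + 1) * C₁ := mul_le_mul_of_nonneg_right h2 hC₁0

lemma delta_facts (C₂ δ : ℝ) (hC₂pos : 0 < C₂)
    (hδ : δ = -(1 / 2) + Real.sqrt (1 / 4 + 1 / (2 * C₂))) :
    0 < δ ∧ δ * (δ + 1) * C₂ = 1 / 2 := by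
  set s := Real.sqrt (1 / 4 + 1 / (2 * C₂)) with hs
  have harg : (0:ℝ) < 1 / 4 + 1 / (2 * C₂) := by positivity
  have hs2 : s ^ 2 = 1 / 4 + 1 / (2 * C₂) := Real.sq_sqrt (le_of_lt harg)
  have hsnn : 0 ≤ s := Real.sqrt_nonneg _
  have h3 : (0:ℝ) < 1 / (2 * C₂) := by positivity
  have hs12 : 1 / 2 < s := by
    rw [hs]
    rw [show ((1:ℝ)/2) = Real.sqrt (1/4) by
      rw [show ((1:ℝ)/4) = (1/2)^2 by norm_num, Real.sqrt_sq (by norm_num)]]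
    exact Real.sqrt_lt_sqrt (by norm_num) (by linarith)
  constructor
  · rw [hδ]; linarith
  · have h4 : δ * (δ + 1) = s ^ 2 - 1 / 4 := by rw [hδ]; ring
    rw [h4, hs2]; field_simp; ring

lemma key_right (V : ℝ → ℝ) (E : ℂ) (u u' : ℝ → ℂ)
    (heq : ∀ a b : ℝ, a ≤ b → u' b - u' a = ∫ t in a..b, ((V t : ℂ) - E) * u t)
    (hu : ∀ x : ℝ, HasDerivAt u (u' x) x)
    (hu'c : Continuous u')
    (hfint : ∀ a b : ℝ, IntervalIntegrable (fun t => ((V t : ℂ) - E) * u t) volume a b)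
    (hVnint : ∀ a b : ℝ, IntervalIntegrable (fun t => max (-V t) 0) volume a b)
    (C₁ δ : ℝ) (hC₁0 : 0 ≤ C₁) (hδ0 : 0 < δ)
    (hhalf : δ * (δ + 1) * (C₁ + ‖E‖) ≤ 1 / 2)
    (hcov : ∀ a b : ℝ, a ≤ b → b - a ≤ δ → ∫ t in a..b, max (-V t) 0 ≤ (δ + 1) * C₁)
    (z d M : ℝ) (hzd : z ≤ d) (hdδ : d - z ≤ δ)
    (hM : ∀ t ∈ Icc z d, ‖u t‖ ≤ M)
    (hMz : ‖u z‖ = M) (hMpos : 0 < M)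
    (hg'z : ((starRingEnd ℂ) (u z) * u' z).re = 0) :
    M ^ 2 / 2 ≤ ((starRingEnd ℂ) (u z) * u d).re := by
  set c := (starRingEnd ℂ) (u z) with hc
  have hcabs : ‖c‖ = M := by rw [hc, Complex.norm_conj, hMz]
  set g : ℝ → ℝ := fun y => (c * u y).re with hgdef
  set g' : ℝ → ℝ := fun y => (c * u' y).re with hg'def
  have hg : ∀ y, HasDerivAt g (g' y) y := fun y =>
    Complex.reCLM.hasFDerivAt.comp_hasDerivAt y ((hu y).const_mul c)
  have hg'c : Continuous g' := Complex.continuous_re.comp (continuous_const.mul hu'c)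
  set W : ℝ → ℝ := fun t => max (-V t) 0 + ‖E‖ with hW
  have hWnn : ∀ t, 0 ≤ W t := fun t => add_nonneg (le_max_right _ _) (norm_nonneg E)
  have hWint : ∀ a b : ℝ, IntervalIntegrable W volume a b := fun a b =>
    (hVnint a b).add intervalIntegrable_const
  set B : ℝ := ∫ t in z..d, W t with hB
  have hB0 : 0 ≤ B := intervalIntegral.integral_nonneg hzd (fun t _ => hWnn t)
  have hdz0 : 0 ≤ d - z := by linarith
  have hBhalf : B * (d - z) ≤ 1 / 2 := by
    have hBsplit : B = (∫ t in z..d, max (-V t) 0) + (d - z) * ‖E‖ := by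
      rw [hB, hW, intervalIntegral.integral_add (hVnint z d) intervalIntegrable_const,
        intervalIntegral.integral_const, smul_eq_mul]
    have h1 : ∫ t in z..d, max (-V t) 0 ≤ (δ + 1) * C₁ := hcov z d hzd hdδ
    have h2 : (0:ℝ) ≤ ∫ t in z..d, max (-V t) 0 :=
      intervalIntegral.integral_nonneg hzd (fun t _ => le_max_right _ _)
    have he0 : (0:ℝ) ≤ ‖E‖ := norm_nonneg E
    nlinarith [mul_le_mul_of_nonneg_right h1 hdz0, mul_nonneg he0 hdz0,
      mul_le_mul_of_nonneg_right hdδ he0]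
  have hgz : g z = M ^ 2 := by
    have h1 : c * u z = ((Complex.normSq (u z) : ℝ) : ℂ) := by rw [hc, mul_comm, Complex.mul_conj]
    show (c * u z).re = M ^ 2
    rw [h1, Complex.ofReal_re, Complex.normSq_eq_norm_sq, hMz]
  have hgle : ∀ t ∈ Icc z d, g t ≤ M ^ 2 := by
    intro t ht
    calc g t ≤ ‖c * u t‖ := Complex.re_le_norm _
      _ = M * ‖u t‖ := by rw [norm_mul, hcabs]
      _ ≤ M * M := mul_le_mul_of_nonneg_left (hM t ht) hMpos.le
      _ = M ^ 2 := (sq M).symm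
  have hgrow : ∀ s ∈ Icc z d, (∀ t ∈ Icc z s, 0 ≤ g t) → -(M ^ 2 * B) ≤ g' s := by
    intro s hs hpos
    have hzs : z ≤ s := hs.1
    have hqint : IntervalIntegrable (fun t => (c * (((V t : ℂ) - E) * u t)).re) volume z s := by
      have h := (hfint z s).const_mul c
      exact ⟨h.1.re, h.2.re⟩
    have hstep : g' s - g' z = ∫ t in z..s, (c * (((V t : ℂ) - E) * u t)).re := by
      have h1 := heq z s hzs
      have h2 : c * (u' s - u' z) = ∫ t in z..s, c * (((V t : ℂ) - E) * u t) := by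
        rw [h1, intervalIntegral.integral_const_mul]
      calc g' s - g' z = (c * (u' s - u' z)).re := by
            simp only [hg'def, mul_sub, Complex.sub_re]
        _ = (∫ t in z..s, c * (((V t : ℂ) - E) * u t)).re := by rw [h2]
        _ = ∫ t in z..s, (c * (((V t : ℂ) - E) * u t)).re :=
            (Complex.reCLM.intervalIntegral_comp_comm ((hfint z s).const_mul c)).symm
    have hpt : ∀ t ∈ Icc z s, -(M ^ 2) * W t ≤ (c * (((V t : ℂ) - E) * u t)).re := by
      intro t ht
      have htd : t ∈ Icc z d := ⟨ht.1, ht.2.trans hs.2⟩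
      have h0 : 0 ≤ g t := hpos t ht
      have h1 : g t ≤ M ^ 2 := hgle t htd
      have hut : ‖u t‖ ≤ M := hM t htd
      have hexp : (c * (((V t : ℂ) - E) * u t)).re = V t * g t - (E * (c * u t)).re := by
        have hh : c * (((V t : ℂ) - E) * u t) = (V t : ℂ) * (c * u t) - E * (c * u t) := by
          ring
        rw [hh, Complex.sub_re, Complex.re_ofReal_mul]
      rw [hexp]
      have hEre : (E * (c * u t)).re ≤ ‖E‖ * M ^ 2 := by
        calc (E * (c * u t)).re ≤ ‖E * (c * u t)‖ := Complex.re_le_norm _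
          _ = ‖E‖ * (‖c‖ * ‖u t‖) := by
              rw [norm_mul, norm_mul]
          _ ≤ ‖E‖ * M ^ 2 := by
              apply mul_le_mul_of_nonneg_left _ (norm_nonneg E)
              rw [hcabs, sq]
              exact mul_le_mul_of_nonneg_left hut hMpos.le
      have hVg : -(max (-V t) 0 * M ^ 2) ≤ V t * g t := by
        rcases le_or_gt 0 (V t) with h | h
        · have h3 : 0 ≤ V t * g t := mul_nonneg h h0
          have h4 : (0:ℝ) ≤ max (-V t) 0 * M ^ 2 :=
            mul_nonneg (le_max_right _ _) (sq_nonneg M)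
          linarith
        · have hmax : max (-V t) 0 = -V t := max_eq_left (by linarith)
          rw [hmax]
          nlinarith
      have hWt : W t = max (-V t) 0 + ‖E‖ := rfl
      rw [hWt]
      nlinarith
    have hWzs : ∫ t in z..s, W t ≤ B := by
      rw [hB]
      apply intervalIntegral.integral_mono_interval le_rfl hzs hs.2 _ (hWint z d)
      filter_upwards with t using hWnn t
    have hmono : ∫ t in z..s, (-(M ^ 2) * W t)
        ≤ ∫ t in z..s, (c * (((V t : ℂ) - E) * u t)).re :=
      intervalIntegral.integral_mono_on hzs ((hWint z s).const_mul _) hqint hpt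
    have hcalc : ∫ t in z..s, (-(M ^ 2) * W t) = -(M ^ 2) * ∫ t in z..s, W t :=
      intervalIntegral.integral_const_mul _ _
    have hgz' : g' z = 0 := hg'z
    have hfin : M ^ 2 * (∫ t in z..s, W t) ≤ M ^ 2 * B :=
      mul_le_mul_of_nonneg_left hWzs (sq_nonneg M)
    rw [hcalc] at hmono
    linarith [hstep, hmono]
  exact core_aux g g' z d M B hzd hg (hg'c.intervalIntegrable z d) hgz hMpos hB0 hBhalf hgrow

lemma key_left (V : ℝ → ℝ) (E : ℂ) (u u' : ℝ → ℂ)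
    (heq : ∀ a b : ℝ, a ≤ b → u' b - u' a = ∫ t in a..b, ((V t : ℂ) - E) * u t)
    (hu : ∀ x : ℝ, HasDerivAt u (u' x) x)
    (hu'c : Continuous u')
    (hfint : ∀ a b : ℝ, IntervalIntegrable (fun t => ((V t : ℂ) - E) * u t) volume a b)
    (hVnint : ∀ a b : ℝ, IntervalIntegrable (fun t => max (-V t) 0) volume a b)
    (C₁ δ : ℝ) (hC₁0 : 0 ≤ C₁) (hδ0 : 0 < δ)
    (hhalf : δ * (δ + 1) * (C₁ + ‖E‖) ≤ 1 / 2)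
    (hcov : ∀ a b : ℝ, a ≤ b → b - a ≤ δ → ∫ t in a..b, max (-V t) 0 ≤ (δ + 1) * C₁)
    (z d M : ℝ) (hzd : d ≤ z) (hdδ : z - d ≤ δ)
    (hM : ∀ t ∈ Icc d z, ‖u t‖ ≤ M)
    (hMz : ‖u z‖ = M) (hMpos : 0 < M)
    (hg'z : ((starRingEnd ℂ) (u z) * u' z).re = 0) :
    M ^ 2 / 2 ≤ ((starRingEnd ℂ) (u z) * u d).re := by
  set c := (starRingEnd ℂ) (u z) with hc
  have hcabs : ‖c‖ = M := by rw [hc, Complex.norm_conj, hMz]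
  set g : ℝ → ℝ := fun y => (c * u y).re with hgdef
  set g' : ℝ → ℝ := fun y => (c * u' y).re with hg'def
  have hg : ∀ y, HasDerivAt g (g' y) y := fun y =>
    Complex.reCLM.hasFDerivAt.comp_hasDerivAt y ((hu y).const_mul c)
  have hg'c : Continuous g' := Complex.continuous_re.comp (continuous_const.mul hu'c)
  set W : ℝ → ℝ := fun t => max (-V t) 0 + ‖E‖ with hW
  have hWnn : ∀ t, 0 ≤ W t := fun t => add_nonneg (le_max_right _ _) (norm_nonneg E)
  have hWint : ∀ a b : ℝ, IntervalIntegrable W volume a b := fun a b =>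
    (hVnint a b).add intervalIntegrable_const
  set B : ℝ := ∫ t in d..z, W t with hB
  have hB0 : 0 ≤ B := intervalIntegral.integral_nonneg hzd (fun t _ => hWnn t)
  have hdz0 : 0 ≤ z - d := by linarith
  have hBhalf : B * (z - d) ≤ 1 / 2 := by
    have hBsplit : B = (∫ t in d..z, max (-V t) 0) + (z - d) * ‖E‖ := by
      rw [hB, hW, intervalIntegral.integral_add (hVnint d z) intervalIntegrable_const,
        intervalIntegral.integral_const, smul_eq_mul]
    have h1 : ∫ t in d..z, max (-V t) 0 ≤ (δ + 1) * C₁ := hcov d z hzd hdδ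
    have h2 : (0:ℝ) ≤ ∫ t in d..z, max (-V t) 0 :=
      intervalIntegral.integral_nonneg hzd (fun t _ => le_max_right _ _)
    have he0 : (0:ℝ) ≤ ‖E‖ := norm_nonneg E
    nlinarith [mul_le_mul_of_nonneg_right h1 hdz0, mul_nonneg he0 hdz0,
      mul_le_mul_of_nonneg_right hdδ he0]
  have hgz : g z = M ^ 2 := by
    have h1 : c * u z = ((Complex.normSq (u z) : ℝ) : ℂ) := by rw [hc, mul_comm, Complex.mul_conj]
    show (c * u z).re = M ^ 2
    rw [h1, Complex.ofReal_re, Complex.normSq_eq_norm_sq, hMz]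
  have hgle : ∀ t ∈ Icc d z, g t ≤ M ^ 2 := by
    intro t ht
    calc g t ≤ ‖c * u t‖ := Complex.re_le_norm _
      _ = M * ‖u t‖ := by rw [norm_mul, hcabs]
      _ ≤ M * M := mul_le_mul_of_nonneg_left (hM t ht) hMpos.le
      _ = M ^ 2 := (sq M).symm
  -- reflected function
  set G : ℝ → ℝ := fun y => g (2 * z - y) with hGdef
  set G' : ℝ → ℝ := fun y => -g' (2 * z - y) with hG'def
  have hGderiv : ∀ y, HasDerivAt G (G' y) y := by
    intro y
    have hinner : HasDerivAt (fun y : ℝ => 2 * z - y) (-1 : ℝ) y :=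
      (hasDerivAt_id y).const_sub (2 * z)
    have h := (hg (2 * z - y)).comp y hinner
    refine h.congr_deriv ?_
    simp [hG'def]
  have hG'c : Continuous G' :=
    (hg'c.comp ((continuous_const.sub continuous_id))).neg
  have hGgrow : ∀ s ∈ Icc z (2 * z - d), (∀ t ∈ Icc z s, 0 ≤ G t) → -(M ^ 2 * B) ≤ G' s := by
    intro s hs hpos
    set σ := 2 * z - s with hσ
    have hσmem : σ ∈ Icc d z := by
      constructor <;> [skip; skip] <;> simp [hσ] <;> linarith [hs.1, hs.2]
    have hσz : σ ≤ z := hσmem.2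
    have hqint : IntervalIntegrable (fun t => (c * (((V t : ℂ) - E) * u t)).re) volume σ z := by
      have h := (hfint σ z).const_mul c
      exact ⟨h.1.re, h.2.re⟩
    have hstep : g' z - g' σ = ∫ t in σ..z, (c * (((V t : ℂ) - E) * u t)).re := by
      have h1 := heq σ z hσz
      have h2 : c * (u' z - u' σ) = ∫ t in σ..z, c * (((V t : ℂ) - E) * u t) := by
        rw [h1, intervalIntegral.integral_const_mul]
      calc g' z - g' σ = (c * (u' z - u' σ)).re := by
            simp only [hg'def, mul_sub, Complex.sub_re]
        _ = (∫ t in σ..z, c * (((V t : ℂ) - E) * u t)).re := by rw [h2]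
        _ = ∫ t in σ..z, (c * (((V t : ℂ) - E) * u t)).re :=
            (Complex.reCLM.intervalIntegral_comp_comm ((hfint σ z).const_mul c)).symm
    have hposσ : ∀ t ∈ Icc σ z, 0 ≤ g t := by
      intro t ht
      have h := hpos (2 * z - t) ⟨by linarith [ht.2], by simp [hσ] at *; linarith [ht.1]⟩
      simpa [hGdef, show 2 * z - (2 * z - t) = t by ring] using h
    have hpt : ∀ t ∈ Icc σ z, -(M ^ 2) * W t ≤ (c * (((V t : ℂ) - E) * u t)).re := by
      intro t ht
      have htd : t ∈ Icc d z := ⟨le_trans hσmem.1 ht.1, ht.2⟩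
      have h0 : 0 ≤ g t := hposσ t ht
      have h1 : g t ≤ M ^ 2 := hgle t htd
      have hut : ‖u t‖ ≤ M := hM t htd
      have hexp : (c * (((V t : ℂ) - E) * u t)).re = V t * g t - (E * (c * u t)).re := by
        have hh : c * (((V t : ℂ) - E) * u t) = (V t : ℂ) * (c * u t) - E * (c * u t) := by
          ring
        rw [hh, Complex.sub_re, Complex.re_ofReal_mul]
      rw [hexp]
      have hEre : (E * (c * u t)).re ≤ ‖E‖ * M ^ 2 := by
        calc (E * (c * u t)).re ≤ ‖E * (c * u t)‖ := Complex.re_le_norm _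
          _ = ‖E‖ * (‖c‖ * ‖u t‖) := by
              rw [norm_mul, norm_mul]
          _ ≤ ‖E‖ * M ^ 2 := by
              apply mul_le_mul_of_nonneg_left _ (norm_nonneg E)
              rw [hcabs, sq]
              exact mul_le_mul_of_nonneg_left hut hMpos.le
      have hVg : -(max (-V t) 0 * M ^ 2) ≤ V t * g t := by
        rcases le_or_gt 0 (V t) with h | h
        · have h3 : 0 ≤ V t * g t := mul_nonneg h h0
          have h4 : (0:ℝ) ≤ max (-V t) 0 * M ^ 2 :=
            mul_nonneg (le_max_right _ _) (sq_nonneg M)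
          linarith
        · have hmax : max (-V t) 0 = -V t := max_eq_left (by linarith)
          rw [hmax]
          nlinarith
      have hWt : W t = max (-V t) 0 + ‖E‖ := rfl
      rw [hWt]
      nlinarith
    have hWσz : ∫ t in σ..z, W t ≤ B := by
      rw [hB]
      apply intervalIntegral.integral_mono_interval hσmem.1 hσz le_rfl _ (hWint d z)
      filter_upwards with t using hWnn t
    have hmono : ∫ t in σ..z, (-(M ^ 2) * W t)
        ≤ ∫ t in σ..z, (c * (((V t : ℂ) - E) * u t)).re :=
      intervalIntegral.integral_mono_on hσz ((hWint σ z).const_mul _) hqint hpt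
    have hcalc : ∫ t in σ..z, (-(M ^ 2) * W t) = -(M ^ 2) * ∫ t in σ..z, W t :=
      intervalIntegral.integral_const_mul _ _
    have hgz' : g' z = 0 := hg'z
    have hfin : M ^ 2 * (∫ t in σ..z, W t) ≤ M ^ 2 * B :=
      mul_le_mul_of_nonneg_left hWσz (sq_nonneg M)
    rw [hcalc] at hmono
    have : G' s = -g' σ := by rw [hG'def]
    rw [this]
    linarith [hstep, hmono]
  have hGz : G z = M ^ 2 := by
    have : (2:ℝ) * z - z = z := by ring
    rw [hGdef]; simp only [this]; exact hgz
  have hcore := core_aux G G' z (2 * z - d) M B (by linarith) hGderiv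
    (hG'c.intervalIntegrable _ _) hGz hMpos hB0 (by rw [show 2*z - d - z = z - d by ring]; exact hBhalf)
    hGgrow
  have : G (2 * z - d) = g d := by rw [hGdef]; simp only [show 2*z - (2*z - d) = d by ring]
  rw [this] at hcore
  exact hcore

/-- Theorem 1.1(iii): for `1 ≤ p < ∞`,
`|u(x)|^p ≤ (2^p/δ) ∫_{x-δ}^{x+δ} |u(y)|^p dy`, where `δ = -1/2 + √(1/4 + 1/(2C₂))`. -/
theorem stmt_4
    (V : ℝ → ℝ) (hVmeas : Measurable V)
    (hVloc : LocallyIntegrable V volume)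
    (C₁ : ℝ)
    (hC₁ : IsLUB (Set.range fun x : ℝ => ∫ y in x..x + 1, max (-V y) 0) C₁)
    (E : ℂ) (u u' : ℝ → ℂ)
    (hu : ∀ x : ℝ, HasDerivAt u (u' x) x)
    (heq : ∀ a b : ℝ, a ≤ b →
      u' b - u' a = ∫ t in a..b, ((V t : ℂ) - E) * u t)
    (C₂ : ℝ) (hC₂ : C₂ = C₁ + ‖E‖) (hC₂pos : 0 < C₂)
    (δ : ℝ) (hδ : δ = -(1 / 2) + Real.sqrt (1 / 4 + 1 / (2 * C₂)))
    (p : ℝ) (hp : 1 ≤ p) (x : ℝ) :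
    ‖u x‖ ^ p
      ≤ (2 ^ p / δ) * ∫ y in x - δ..x + δ, ‖u y‖ ^ p := by
  obtain ⟨hδ0, hδhalf⟩ := delta_facts C₂ δ hC₂pos hδ
  have hhalf : δ * (δ + 1) * (C₁ + ‖E‖) ≤ 1 / 2 := by
    rw [← hC₂]; rw [hδhalf]
  -- basic integrability facts
  have hVint : ∀ a b : ℝ, IntervalIntegrable V volume a b := fun a b =>
    intervalIntegrable_iff.mpr
      ((hVloc.integrableOn_isCompact isCompact_uIcc).mono_set Ioc_subset_Icc_self)
  have hVnint : ∀ a b : ℝ, IntervalIntegrable (fun t => max (-V t) 0) volume a b := by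
    intro a b
    have hmeas : Measurable fun t => max (-V t) 0 := hVmeas.neg.max measurable_const
    constructor <;>
    · apply Integrable.mono (by first | exact (hVint a b).1 | exact (hVint a b).2)
        hmeas.aestronglyMeasurable
      filter_upwards with t
      simp only [Real.norm_eq_abs]
      rw [abs_of_nonneg (le_max_right _ _)]
      rcases le_or_gt (V t) 0 with h | h
      · rw [max_eq_left (by linarith)]; rw [abs_of_nonpos h]
      · rw [max_eq_right (by linarith)]; positivity
  have hC₁0 : 0 ≤ C₁ := by
    have h0 : (0:ℝ) ≤ ∫ y in (0:ℝ)..(0:ℝ)+1, max (-V y) 0 :=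
      intervalIntegral.integral_nonneg (by norm_num) (fun t _ => le_max_right _ _)
    exact le_trans h0 (hC₁.1 ⟨0, rfl⟩)
  have hcov := cover_aux V C₁ δ hC₁ hVnint hδ0.le hC₁0
  have hucont : Continuous u := by
    rw [continuous_iff_continuousAt]; exact fun y => (hu y).continuousAt
  have hfint : ∀ a b : ℝ, IntervalIntegrable (fun t => ((V t : ℂ) - E) * u t) volume a b := by
    intro a b
    have h1 : IntervalIntegrable (fun t => ((V t : ℂ)) - E) volume a b := by
      refine IntervalIntegrable.sub ⟨(hVint a b).1.ofReal, (hVint a b).2.ofReal⟩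
        intervalIntegrable_const
    exact h1.mul_continuousOn hucont.continuousOn
  have hu'c : Continuous u' := by
    have hrepr : u' = fun b : ℝ => u' 0 + ∫ t in (0:ℝ)..b, ((V t : ℂ) - E) * u t := by
      funext b
      rcases le_or_gt 0 b with h | h
      · have h1 := heq 0 b h
        rw [← h1]; ring
      · have h1 := heq b 0 h.le
        rw [intervalIntegral.integral_symm b 0, ← h1]; ring
    rw [hrepr]
    exact continuous_const.add (intervalIntegral.continuous_primitive hfint 0)
  set A := ‖u x‖ with hA
  set F : ℝ → ℝ := fun y => ‖u y‖ ^ p with hF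
  have hFc : Continuous F :=
    (continuous_norm.comp hucont).rpow_const (fun y => Or.inr (by linarith))
  have hFnn : ∀ y, 0 ≤ F y := fun y => Real.rpow_nonneg (norm_nonneg _) p
  have hInn : 0 ≤ ∫ y in x - δ..x + δ, F y :=
    intervalIntegral.integral_nonneg (by linarith) (fun t _ => hFnn t)
  rcases eq_or_lt_of_le (norm_nonneg (u x)) with hA0 | hA0
  · -- u x = 0
    have hA0' : A = 0 := hA.trans hA0.symm
    rw [hA0', Real.zero_rpow (by intro h; rw [h] at hp; linarith : p ≠ 0)]
    exact mul_nonneg (by positivity) hInn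
  -- main case : A > 0
  have key : ∃ a b : ℝ, x - δ ≤ a ∧ b ≤ x + δ ∧ b - a = δ ∧
      ∀ y ∈ Icc a b, A / 2 ≤ ‖u y‖ := by
    by_cases hR : ∀ y ∈ Icc x (x + δ), A / 2 ≤ ‖u y‖
    · exact ⟨x, x + δ, by linarith, le_rfl, by ring, hR⟩
    by_cases hL : ∀ y ∈ Icc (x - δ) x, A / 2 ≤ ‖u y‖
    · exact ⟨x - δ, x, le_rfl, by linarith, by ring, hL⟩
    exfalso
    push_neg at hR hL
    obtain ⟨yp, hypmem, hyp⟩ := hR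
    obtain ⟨ym, hymmem, hym⟩ := hL
    have hxyp : x < yp := by
      rcases lt_or_eq_of_le hypmem.1 with h | h
      · exact h
      · exfalso; rw [← h, ← hA] at hyp; linarith
    have hymx : ym < x := by
      rcases lt_or_eq_of_le hymmem.2 with h | h
      · exact h
      · exfalso; rw [h, ← hA] at hym; linarith
    have hymyp : ym ≤ yp := by linarith
    obtain ⟨z, hzmem, hzmax⟩ := (isCompact_Icc : IsCompact (Icc ym yp)).exists_isMaxOn
      ⟨x, ⟨hymx.le, hxyp.le⟩⟩ ((continuous_norm.comp hucont).continuousOn)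
    set M := ‖u z‖ with hM
    have hMA : A ≤ M := hzmax ⟨hymx.le, hxyp.le⟩
    have hMpos : 0 < M := lt_of_lt_of_le hA0 hMA
    have hzyp : z < yp := by
      rcases lt_or_eq_of_le hzmem.2 with h | h
      · exact h
      · exfalso
        have : M < A / 2 := by rw [hM, h]; exact hyp
        linarith
    have hymz : ym < z := by
      rcases lt_or_eq_of_le hzmem.1 with h | h
      · exact h
      · exfalso
        have : M < A / 2 := by rw [hM, ← h]; exact hym
        linarith
    -- local max of g at z
    have hgz2 : ((starRingEnd ℂ) (u z) * u z).re = M ^ 2 := by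
      rw [mul_comm, Complex.mul_conj, Complex.ofReal_re, Complex.normSq_eq_norm_sq]
    have hloc : IsLocalMax (fun y => ((starRingEnd ℂ) (u z) * u y).re) z := by
      filter_upwards [Ioo_mem_nhds hymz hzyp] with t ht
      have h1 : ‖u t‖ ≤ M := hzmax ⟨ht.1.le, ht.2.le⟩
      calc ((starRingEnd ℂ) (u z) * u t).re ≤ ‖(starRingEnd ℂ) (u z) * u t‖ :=
            Complex.re_le_norm _
        _ = M * ‖u t‖ := by rw [norm_mul, Complex.norm_conj]
        _ ≤ M * M := mul_le_mul_of_nonneg_left h1 hMpos.le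
        _ = ((starRingEnd ℂ) (u z) * u z).re := by rw [hgz2]; ring
    have hg'z : ((starRingEnd ℂ) (u z) * u' z).re = 0 :=
      hloc.hasDerivAt_eq_zero
        (Complex.reCLM.hasFDerivAt.comp_hasDerivAt z ((hu z).const_mul _))
    rcases le_or_gt x z with hxz | hxz
    · -- use key_right with d = yp
      have hk := key_right V E u u' heq hu hu'c hfint hVnint C₁ δ hC₁0 hδ0 hhalf hcov
        z yp M hzyp.le (by linarith [hypmem.2]) (fun t ht => hzmax ⟨by linarith [ht.1], ht.2⟩)
        rfl hMpos hg'z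
      have hub : ((starRingEnd ℂ) (u z) * u yp).re ≤ M * ‖u yp‖ := by
        calc ((starRingEnd ℂ) (u z) * u yp).re ≤ ‖(starRingEnd ℂ) (u z) * u yp‖ :=
              Complex.re_le_norm _
          _ = M * ‖u yp‖ := by rw [norm_mul, Complex.norm_conj]
      nlinarith [hyp, hMA, hMpos]
    · -- use key_left with d = ym
      have hk := key_left V E u u' heq hu hu'c hfint hVnint C₁ δ hC₁0 hδ0 hhalf hcov
        z ym M hymz.le (by linarith [hymmem.1]) (fun t ht => hzmax ⟨ht.1, by linarith [ht.2]⟩)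
        rfl hMpos hg'z
      have hub : ((starRingEnd ℂ) (u z) * u ym).re ≤ M * ‖u ym‖ := by
        calc ((starRingEnd ℂ) (u z) * u ym).re ≤ ‖(starRingEnd ℂ) (u z) * u ym‖ :=
              Complex.re_le_norm _
          _ = M * ‖u ym‖ := by rw [norm_mul, Complex.norm_conj]
      nlinarith [hym, hMA, hMpos]
  obtain ⟨a, b, ha, hb, hlen, hbig⟩ := key
  have hab : a ≤ b := by linarith
  have h1 : (A / 2) ^ p * δ ≤ ∫ y in a..b, F y := by
    have hmono : ∫ _ in a..b, (A / 2) ^ p ≤ ∫ y in a..b, F y := by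
      apply intervalIntegral.integral_mono_on hab intervalIntegrable_const
        (hFc.intervalIntegrable a b)
      intro y hy
      exact Real.rpow_le_rpow (by positivity) (hbig y hy) (by linarith)
    rwa [intervalIntegral.integral_const, hlen, smul_eq_mul, mul_comm] at hmono
  have h2 : ∫ y in a..b, F y ≤ ∫ y in x - δ..x + δ, F y := by
    apply intervalIntegral.integral_mono_interval ha hab hb _ (hFc.intervalIntegrable _ _)
    filter_upwards with t using hFnn t
  have hsplit : A ^ p = 2 ^ p * (A / 2) ^ p := by
    rw [← Real.mul_rpow (by norm_num) (by positivity)]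
    congr 1
    ring
  rw [hsplit, div_mul_eq_mul_div, le_div_iff₀ hδ0]
  have h3 : (0:ℝ) < 2 ^ p := Real.rpow_pos_of_pos (by norm_num) p
  nlinarith [mul_le_mul_of_nonneg_left (h1.trans h2) h3.le]
end

section
/- If u is bounded on ℝ, then u' is bounded on ℝ; more precisely, sup_{x ∈ ℝ} |u'(x)| ≤ (C₂ + 2·√C₂) · sup_{x ∈ ℝ} |u(x)|. -/
open MeasureTheory Set
open intervalIntegral

lemma core_s7 (δ M q : ℝ) (hδ : 0 < δ) (hM : 0 ≤ M) (hq : 0 < q)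
    (w g φ : ℝ → ℝ)
    (hw : ∀ t, HasDerivAt w (g t) t)
    (hgcont : ContinuousOn g (Icc 0 δ))
    (hφcont : ContinuousOn φ (Icc 0 δ))
    (hwM : ∀ t, |w t| ≤ M)
    (hw0 : 0 ≤ w 0) (hg0 : g 0 = q) (hφ0 : φ 0 = 0)
    (hdrop : ∀ s t : ℝ, 0 ≤ s → s ≤ t → t ≤ δ →
      (∀ r ∈ Icc s t, 0 ≤ w r) → g s - g t ≤ φ t - φ s)
    (hφq : ∀ t ∈ Icc (0:ℝ) δ, φ t < q) :
    q * δ ≤ 2 * M + ∫ t in (0:ℝ)..δ, φ t := by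
  have hwmono : ∀ b ∈ Icc (0:ℝ) δ, (∀ s ∈ Ico (0:ℝ) b, 0 < g s) → MonotoneOn w (Icc 0 b) := by
    intro b hb hpos
    apply monotoneOn_of_deriv_nonneg (convex_Icc 0 b)
      (fun t _ => (hw t).continuousAt.continuousWithinAt)
      (fun t _ => ((hw t).differentiableAt).differentiableWithinAt)
    intro t ht
    rw [interior_Icc] at ht
    rw [(hw t).deriv]
    exact (hpos t ⟨ht.1.le, ht.2⟩).le
  -- Step 1: g positive on [0, δ]
  have hgpos : ∀ t ∈ Icc (0:ℝ) δ, 0 < g t := by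
    by_contra h
    push_neg at h
    obtain ⟨t₁, ht₁, ht₁g⟩ := h
    set S : Set ℝ := Icc 0 δ ∩ g ⁻¹' (Iic 0) with hS
    have hSne : S.Nonempty := ⟨t₁, ht₁, ht₁g⟩
    have hSbdd : BddBelow S := ⟨0, fun x hx => hx.1.1⟩
    have hSclosed : IsClosed S :=
      hgcont.preimage_isClosed_of_isClosed isClosed_Icc isClosed_Iic
    set t₀ := sInf S with ht₀def
    have ht₀S : t₀ ∈ S := hSclosed.csInf_mem hSne hSbdd
    have ht₀pos : 0 < t₀ := by
      rcases ht₀S.1.1.lt_or_eq with h0 | h0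
      · exact h0
      · exfalso
        have : g t₀ ≤ 0 := ht₀S.2
        rw [← h0, hg0] at this
        exact absurd this (not_le.mpr hq)
    have hlt : ∀ s ∈ Ico (0:ℝ) t₀, 0 < g s := by
      intro s hs
      by_contra hgs
      push_neg at hgs
      have : s ∈ S := ⟨⟨hs.1, hs.2.le.trans ht₀S.1.2⟩, hgs⟩
      exact absurd (csInf_le hSbdd this) (not_le.mpr hs.2)
    have hmono := hwmono t₀ ht₀S.1 hlt
    have hwnn : ∀ r ∈ Icc (0:ℝ) t₀, 0 ≤ w r := by
      intro r hr
      exact hw0.trans (hmono ⟨le_refl 0, ht₀pos.le⟩ hr hr.1)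
    have hd := hdrop 0 t₀ le_rfl ht₀pos.le ht₀S.1.2 hwnn
    rw [hg0, hφ0, sub_zero] at hd
    have : 0 < g t₀ := by
      have := hφq t₀ ht₀S.1
      linarith
    exact absurd ht₀S.2 (not_le.mpr this)
  -- w nonneg on [0, δ]
  have hwnn : ∀ r ∈ Icc (0:ℝ) δ, 0 ≤ w r := by
    intro r hr
    have hmono := hwmono δ (right_mem_Icc.mpr hδ.le) (fun s hs => hgpos s ⟨hs.1, hs.2.le⟩)
    exact hw0.trans (hmono (left_mem_Icc.mpr hδ.le) hr hr.1)
  -- pointwise lower bound on g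
  have hglb : ∀ t ∈ Icc (0:ℝ) δ, q - φ t ≤ g t := by
    intro t ht
    have hd := hdrop 0 t le_rfl ht.1 ht.2 (fun r hr => hwnn r ⟨hr.1, hr.2.trans ht.2⟩)
    rw [hg0, hφ0, sub_zero] at hd
    linarith
  have huIcc : uIcc (0:ℝ) δ = Icc 0 δ := uIcc_of_le hδ.le
  have hgint : IntervalIntegrable g volume 0 δ := by
    apply ContinuousOn.intervalIntegrable; rwa [huIcc]
  have hφint : IntervalIntegrable φ volume 0 δ := by
    apply ContinuousOn.intervalIntegrable; rwa [huIcc]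
  have hftc : ∫ t in (0:ℝ)..δ, g t = w δ - w 0 := by
    apply intervalIntegral.integral_eq_sub_of_hasDerivAt
    · intro t _; exact hw t
    · exact hgint
  have hmono2 : ∫ t in (0:ℝ)..δ, (q - φ t) ≤ ∫ t in (0:ℝ)..δ, g t := by
    apply intervalIntegral.integral_mono_on hδ.le _ hgint
    · exact fun x hx => hglb x hx
    · exact (_root_.intervalIntegrable_const).sub hφint
  have hsplit : ∫ t in (0:ℝ)..δ, (q - φ t)
      = q * δ - ∫ t in (0:ℝ)..δ, φ t := by
    rw [intervalIntegral.integral_sub _root_.intervalIntegrable_const hφint,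
      intervalIntegral.integral_const]
    simp [mul_comm]
  have hwd : w δ - w 0 ≤ 2 * M := by
    have h1 := (abs_le.mp (hwM δ)).2
    have h2 := (abs_le.mp (hwM 0)).1
    linarith
  linarith [hsplit ▸ hmono2, hftc ▸ hmono2]

set_option maxHeartbeats 1000000 in
lemma half (V : ℝ → ℝ) (hVmeas : Measurable V)
    (hVint : ∀ a b : ℝ, IntervalIntegrable V volume a b)
    (C₁ : ℝ)
    (hC₁ub : ∀ x : ℝ, (∫ y in x..x + 1, max (-V y) 0) ≤ C₁)
    (E : ℂ) (u u' : ℝ → ℂ)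
    (hu : ∀ x : ℝ, HasDerivAt u (u' x) x)
    (heq : ∀ a b : ℝ, a ≤ b → u' b - u' a = ∫ t in a..b, ((V t : ℂ) - E) * u t)
    (C₂ : ℝ) (hC₂ : C₂ = C₁ + ‖E‖) (hC₂pos : 0 < C₂)
    (M : ℝ) (hM : ∀ x, ‖u x‖ ≤ M)
    (x₀ : ℝ) (hcase : 0 ≤ ((starRingEnd ℂ) (u' x₀) * u x₀).re) :
    ‖u' x₀‖ ≤ (C₂ + 2 * Real.sqrt C₂) * M := by
  -- basic facts
  have hM0 : 0 ≤ M := le_trans (norm_nonneg (u 0)) (hM 0)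
  have hVmint : ∀ a b : ℝ, IntervalIntegrable (fun y => max (-V y) 0) volume a b := by
    intro a b
    have h := (hVint a b).norm
    rw [intervalIntegrable_iff] at h ⊢
    refine h.mono' ((hVmeas.neg.max measurable_const).aestronglyMeasurable) ?_
    filter_upwards with y
    rw [Real.norm_eq_abs, Real.norm_eq_abs, abs_of_nonneg (le_max_right _ _)]
    exact max_le (neg_le_abs _) (abs_nonneg _)
  have hC₁nn : 0 ≤ C₁ :=
    le_trans (intervalIntegral.integral_nonneg (by norm_num)
      (fun y _ => le_max_right _ _)) (hC₁ub 0)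
  have hC₁leC₂ : C₁ ≤ C₂ := by
    rw [hC₂]; linarith [norm_nonneg E]
  set s := Real.sqrt C₂ with hsdef
  have hs : 0 < s := Real.sqrt_pos.mpr hC₂pos
  have hs2 : s ^ 2 = C₂ := Real.sq_sqrt hC₂pos.le
  set δ := 2 / s with hδdef
  have hδpos : 0 < δ := by positivity
  -- accumulated V₋ bounds
  have hFn : ∀ (a : ℝ) (n : ℕ), (∫ y in a..a + n, max (-V y) 0) ≤ n * C₁ := by
    intro a n
    induction n with
    | zero => simp
    | succ k ih =>
      have he : (a : ℝ) + ((k : ℕ) + 1 : ℕ) = (a + k) + 1 := by push_cast; ring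
      rw [he, ← intervalIntegral.integral_add_adjacent_intervals
        (hVmint a (a + k)) (hVmint (a + k) (a + k + 1))]
      have h2 := hC₁ub (a + k)
      push_cast
      linarith
  have hF : ∀ (a t : ℝ), 0 ≤ t → (∫ y in a..a + t, max (-V y) 0) ≤ C₁ * (t + 1) := by
    intro a t ht
    have htn : t ≤ (⌈t⌉₊ : ℝ) := Nat.le_ceil t
    have h1 : (∫ y in a..a + t, max (-V y) 0) ≤ ∫ y in a..a + (⌈t⌉₊ : ℝ), max (-V y) 0 := by
      rw [← intervalIntegral.integral_add_adjacent_intervals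
        (hVmint a (a + t)) (hVmint (a + t) (a + (⌈t⌉₊ : ℝ)))]
      have h0 : 0 ≤ ∫ y in (a + t)..(a + (⌈t⌉₊ : ℝ)), max (-V y) 0 :=
        intervalIntegral.integral_nonneg (by linarith) (fun y _ => le_max_right _ _)
      linarith
    have h2 : (⌈t⌉₊ : ℝ) * C₁ ≤ (t + 1) * C₁ :=
      mul_le_mul_of_nonneg_right (Nat.ceil_lt_add_one ht).le hC₁nn
    calc (∫ y in a..a + t, max (-V y) 0) ≤ (⌈t⌉₊ : ℝ) * C₁ := h1.trans (hFn a ⌈t⌉₊)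
      _ ≤ (t + 1) * C₁ := h2
      _ = C₁ * (t + 1) := by ring
  -- contradiction setup
  by_contra hcon
  push_neg at hcon
  set q := ‖u' x₀‖ with hqdef
  have hq : 0 < q := lt_of_le_of_lt (by positivity) hcon
  have hz : u' x₀ ≠ 0 := by
    intro h
    rw [hqdef, h] at hq
    simp at hq
  set c : ℂ := (starRingEnd ℂ) (u' x₀) / (q : ℂ) with hcdef
  have hqC : (q : ℂ) ≠ 0 := Complex.ofReal_ne_zero.mpr hq.ne'
  have hcabs : ‖c‖ = 1 := by
    rw [hcdef, norm_div, Complex.norm_conj, Complex.norm_of_nonneg hq.le, ← hqdef, div_self hq.ne']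
  have hcz : c * u' x₀ = (q : ℂ) := by
    rw [hcdef, div_mul_eq_mul_div, mul_comm ((starRingEnd ℂ) (u' x₀)) (u' x₀), Complex.mul_conj]
    rw [Complex.normSq_eq_norm_sq, ← hqdef]
    push_cast
    field_simp
  -- continuity facts
  have hucont : Continuous u := continuous_iff_continuousAt.mpr fun t => (hu t).continuousAt
  have hfint : ∀ a b : ℝ, IntervalIntegrable (fun t => ((V t : ℂ) - E) * u t) volume a b := by
    intro a b
    rw [intervalIntegrable_iff]
    have h1 : IntegrableOn (fun t => ((V t : ℂ) - E)) (Set.uIoc a b) volume := by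
      apply Integrable.sub
      · have h := hVint a b
        rw [intervalIntegrable_iff] at h
        exact h.ofReal
      · exact integrableOn_const measure_Ioc_lt_top.ne
    have h2 := h1.bdd_mul (c := M) (hucont.aestronglyMeasurable.restrict)
      (ae_of_all _ fun x => hM x)
    exact h2.congr (ae_of_all _ fun x => mul_comm _ _)
  have hu'cont : Continuous u' := by
    rw [continuous_iff_continuousAt]
    intro t
    have hp : Continuous fun r => u' (t - 1) + ∫ x in (t-1)..r, ((V x : ℂ) - E) * u x :=
      continuous_const.add (intervalIntegral.continuous_primitive (fun a b => hfint a b) (t - 1))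
    apply hp.continuousAt.congr
    filter_upwards [Ioi_mem_nhds (show t - 1 < t by linarith)] with r hr
    have h := heq (t - 1) r (le_of_lt hr)
    linear_combination -h
  have hreint : ∀ a b : ℝ, IntervalIntegrable
      (fun r => (c * (((V r : ℂ) - E) * u r)).re) volume a b := by
    intro a b
    have h := (hfint a b).const_mul c
    exact ⟨h.1.re, h.2.re⟩
  -- the real data for `core`
  set w : ℝ → ℝ := fun t => (c * u (x₀ + t)).re with hwdef
  set g : ℝ → ℝ := fun t => (c * u' (x₀ + t)).re with hgdef
  set φ : ℝ → ℝ := fun t =>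
    M * ((∫ y in x₀..x₀ + t, max (-V y) 0) + ‖E‖ * t) with hφdef
  have habs_le : ∀ x : ℝ, |(c * u x).re| ≤ M := by
    intro x
    calc |(c * u x).re| ≤ ‖c * u x‖ := Complex.abs_re_le_norm _
      _ = ‖u x‖ := by rw [norm_mul, hcabs, one_mul]
      _ ≤ M := hM x
  have hw : ∀ t, HasDerivAt w (g t) t := by
    intro t
    have h2 : HasDerivAt (fun t' => c * u (x₀ + t')) (c * u' (x₀ + t)) t := by
      have h1 : HasDerivAt u (u' (x₀ + t)) (x₀ + t) := hu _
      exact (h1.comp_const_add x₀ t).const_mul c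
    have h4 := (Complex.reCLM.hasFDerivAt.comp_hasDerivAt t h2)
    exact h4
  have hgcont : ContinuousOn g (Icc 0 δ) :=
    (Complex.continuous_re.comp
      (continuous_const.mul (hu'cont.comp (continuous_const.add continuous_id)))).continuousOn
  have hφcont : ContinuousOn φ (Icc 0 δ) := by
    apply Continuous.continuousOn
    apply continuous_const.mul
    exact ((intervalIntegral.continuous_primitive hVmint x₀).comp
      (continuous_const.add continuous_id)).add (continuous_const.mul continuous_id)
  have hw0 : 0 ≤ w 0 := by
    have h1 : c * u x₀ = ((q⁻¹ : ℝ) : ℂ) * ((starRingEnd ℂ) (u' x₀) * u x₀) := by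
      rw [hcdef]; push_cast; ring
    have h2 : (c * u x₀).re = q⁻¹ * ((starRingEnd ℂ) (u' x₀) * u x₀).re := by
      rw [h1, Complex.re_ofReal_mul]
    show 0 ≤ (c * u (x₀ + 0)).re
    rw [add_zero, h2]
    exact mul_nonneg (inv_nonneg.mpr hq.le) hcase
  have hg0 : g 0 = q := by
    show (c * u' (x₀ + 0)).re = q
    rw [add_zero, hcz, Complex.ofReal_re]
  have hφ0 : φ 0 = 0 := by
    show M * ((∫ y in x₀..x₀ + 0, max (-V y) 0) + ‖E‖ * 0) = 0
    rw [add_zero, intervalIntegral.integral_same]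
    ring
  have hdrop : ∀ s' t : ℝ, 0 ≤ s' → s' ≤ t → t ≤ δ →
      (∀ r ∈ Icc s' t, 0 ≤ w r) → g s' - g t ≤ φ t - φ s' := by
    intro a b ha hab hbδ hwpos
    have hab' : x₀ + a ≤ x₀ + b := by linarith
    have h1 : g b - g a = ∫ r in (x₀ + a)..(x₀ + b), (c * (((V r : ℂ) - E) * u r)).re := by
      have h2 : c * u' (x₀ + b) - c * u' (x₀ + a)
          = ∫ r in (x₀ + a)..(x₀ + b), c * (((V r : ℂ) - E) * u r) := by
        rw [intervalIntegral.integral_const_mul, ← heq _ _ hab']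
        ring
      have h3 : g b - g a = (c * u' (x₀ + b) - c * u' (x₀ + a)).re := by
        simp [hgdef, Complex.sub_re]
      rw [h3, h2]
      have h9 := Complex.reCLM.intervalIntegral_comp_comm ((hfint (x₀ + a) (x₀ + b)).const_mul c)
      simpa using h9.symm
    have h3 : ∀ r ∈ Icc (x₀ + a) (x₀ + b),
        -((c * (((V r : ℂ) - E) * u r)).re) ≤ M * max (-V r) 0 + M * ‖E‖ := by
      intro r hr
      have hw_r : 0 ≤ (c * u r).re := by
        have h := hwpos (r - x₀) ⟨by linarith [hr.1], by linarith [hr.2]⟩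
        simpa [hwdef, add_sub_cancel] using h
      have hw_le : (c * u r).re ≤ M := (le_abs_self _).trans (habs_le r)
      have hexp : (c * (((V r : ℂ) - E) * u r)).re
          = V r * (c * u r).re - (c * (E * u r)).re := by
        have he2 : c * (((V r : ℂ) - E) * u r) = (V r : ℂ) * (c * u r) - c * (E * u r) := by ring
        rw [he2, Complex.sub_re, Complex.re_ofReal_mul]
      have hEb : (c * (E * u r)).re ≤ M * ‖E‖ := by
        calc (c * (E * u r)).re ≤ ‖c * (E * u r)‖ := Complex.re_le_norm _
          _ = ‖E‖ * ‖u r‖ := by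
              rw [norm_mul, hcabs, one_mul, norm_mul]
          _ ≤ ‖E‖ * M := by
              exact mul_le_mul_of_nonneg_left (hM r) (norm_nonneg E)
          _ = M * ‖E‖ := by ring
      have hVb : -(V r * (c * u r).re) ≤ M * max (-V r) 0 := by
        calc -(V r * (c * u r).re) = (-V r) * (c * u r).re := by ring
          _ ≤ max (-V r) 0 * (c * u r).re :=
              mul_le_mul_of_nonneg_right (le_max_left _ _) hw_r
          _ ≤ max (-V r) 0 * M :=
              mul_le_mul_of_nonneg_left hw_le (le_max_right _ _)
          _ = M * max (-V r) 0 := by ring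
      rw [hexp]
      linarith
    have h4 : g a - g b ≤ ∫ r in (x₀ + a)..(x₀ + b),
        (M * max (-V r) 0 + M * ‖E‖) := by
      have h5 : g a - g b = ∫ r in (x₀ + a)..(x₀ + b),
          -((c * (((V r : ℂ) - E) * u r)).re) := by
        rw [intervalIntegral.integral_neg, ← h1]; ring
      rw [h5]
      apply intervalIntegral.integral_mono_on hab' (hreint _ _).neg
        (((hVmint _ _).const_mul M).add _root_.intervalIntegrable_const) h3
    have h6 : (∫ r in (x₀ + a)..(x₀ + b), (M * max (-V r) 0 + M * ‖E‖))
        = M * (∫ y in (x₀ + a)..(x₀ + b), max (-V y) 0) + M * ‖E‖ * (b - a) := by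
      rw [intervalIntegral.integral_add ((hVmint _ _).const_mul M) _root_.intervalIntegrable_const,
        intervalIntegral.integral_const_mul, intervalIntegral.integral_const]
      simp [smul_eq_mul]
      ring
    have h7 : φ b - φ a = M * (∫ y in (x₀ + a)..(x₀ + b), max (-V y) 0)
        + M * ‖E‖ * (b - a) := by
      have hadj := intervalIntegral.integral_add_adjacent_intervals
        (hVmint x₀ (x₀ + a)) (hVmint (x₀ + a) (x₀ + b))
      simp only [hφdef]
      rw [← hadj]
      ring
    linarith
  have hC₂δ : C₂ * δ = 2 * s := by
    rw [hδdef]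
    field_simp
    nlinarith [hs2]
  have hφq : ∀ t ∈ Icc (0:ℝ) δ, φ t < q := by
    intro t ht
    have hFt := hF x₀ t ht.1
    have hEnn : 0 ≤ ‖E‖ := norm_nonneg E
    have h1 : φ t ≤ M * (C₁ + C₂ * δ) := by
      have h2 : (∫ y in x₀..x₀ + t, max (-V y) 0) + ‖E‖ * t
          ≤ C₁ + C₂ * δ := by
        have h3 : C₁ * (t + 1) + ‖E‖ * t ≤ C₁ + C₂ * t := by
          rw [hC₂]; ring_nf; linarith
        have h4 : C₂ * t ≤ C₂ * δ := mul_le_mul_of_nonneg_left ht.2 hC₂pos.le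
        linarith
      calc φ t ≤ M * ((∫ y in x₀..x₀ + t, max (-V y) 0) + ‖E‖ * t) := le_refl _
        _ ≤ M * (C₁ + C₂ * δ) := mul_le_mul_of_nonneg_left h2 hM0
    calc φ t ≤ M * (C₁ + C₂ * δ) := h1
      _ = M * (C₁ + 2 * s) := by rw [hC₂δ]
      _ ≤ M * (C₂ + 2 * s) := by nlinarith
      _ = (C₂ + 2 * s) * M := by ring
      _ < q := hcon
  have hwM : ∀ t, |w t| ≤ M := fun t => habs_le (x₀ + t)
  have hcore := core_s7 δ M q hδpos hM0 hq w g φ hw hgcont hφcont hwM hw0 hg0 hφ0 hdrop hφq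
  -- bound the integral of φ
  have hφle : (∫ t in (0:ℝ)..δ, φ t) ≤ ∫ t in (0:ℝ)..δ, (M * C₁ + M * C₂ * t) := by
    apply intervalIntegral.integral_mono_on hδpos.le
      (ContinuousOn.intervalIntegrable (by rw [uIcc_of_le hδpos.le]; exact hφcont))
      ((_root_.intervalIntegrable_const).add ((continuous_const.mul continuous_id').intervalIntegrable _ _))
    intro t ht
    have hFt := hF x₀ t ht.1
    have hEnn : 0 ≤ ‖E‖ := norm_nonneg E
    show M * ((∫ y in x₀..x₀ + t, max (-V y) 0) + ‖E‖ * t) ≤ M * C₁ + M * C₂ * t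
    rw [hC₂]
    nlinarith [mul_le_mul_of_nonneg_left hFt hM0]
  have hint2 : (∫ t in (0:ℝ)..δ, (M * C₁ + M * C₂ * t))
      = M * C₁ * δ + M * C₂ * (δ ^ 2 / 2) := by
    have h1 : (∫ t in (0:ℝ)..δ, (M * C₁ + M * C₂ * t))
        = (∫ t in (0:ℝ)..δ, M * C₁) + ∫ t in (0:ℝ)..δ, M * C₂ * t :=
      intervalIntegral.integral_add _root_.intervalIntegrable_const
        ((continuous_const.mul continuous_id').intervalIntegrable _ _)
    have h2 : (∫ t in (0:ℝ)..δ, M * C₂ * t) = M * C₂ * ∫ t in (0:ℝ)..δ, t :=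
      intervalIntegral.integral_const_mul _ _
    have h3 : (∫ t in (0:ℝ)..δ, t) = (δ ^ 2 - 0 ^ 2) / 2 := integral_id
    rw [h1, h2, h3, intervalIntegral.integral_const]
    simp [smul_eq_mul]
    ring
  have hδs : δ * s = 2 := by
    rw [hδdef]; field_simp
  have hδ2 : C₂ * δ ^ 2 = 4 := by
    linear_combination δ * hC₂δ + 2 * hδs
  have h7 : q * δ ≤ 4 * M + M * C₁ * δ := by
    have hMC : M * C₂ * (δ ^ 2 / 2) = 2 * M := by
      linear_combination (M / 2) * hδ2
    linarith [hcore, hφle, hint2.le, hint2.ge]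
  have h8 : q ≤ 2 * M * s + M * C₁ := by
    have h9 := mul_le_mul_of_nonneg_right h7 hs.le
    have h10 : q * δ * s = 2 * q := by rw [mul_assoc, hδs]; ring
    have h11 : M * C₁ * δ * s = 2 * (M * C₁) := by rw [mul_assoc, hδs]; ring
    nlinarith [h9, h10, h11]
  have hfin : q ≤ (C₂ + 2 * s) * M := by
    nlinarith [mul_le_mul_of_nonneg_left hC₁leC₂ hM0]
  linarith


set_option maxHeartbeats 1000000 in
/-- If `u` is bounded on `ℝ`, then so is `u'`, and
`sup_x |u'(x)| ≤ (C₂ + 2√C₂) · sup_x |u(x)|`. -/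
theorem stmt_7
    (V : ℝ → ℝ) (hVmeas : Measurable V)
    (hVloc : LocallyIntegrable V volume)
    (C₁ : ℝ)
    (hC₁ : IsLUB (Set.range fun x : ℝ => ∫ y in x..x + 1, max (-V y) 0) C₁)
    (E : ℂ) (u u' : ℝ → ℂ)
    (hu : ∀ x : ℝ, HasDerivAt u (u' x) x)
    (heq : ∀ a b : ℝ, a ≤ b →
      u' b - u' a = ∫ t in a..b, ((V t : ℂ) - E) * u t)
    (C₂ : ℝ) (hC₂ : C₂ = C₁ + ‖E‖) (hC₂pos : 0 < C₂)
    (hbdd : BddAbove (Set.range fun x => ‖u x‖)) :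
    BddAbove (Set.range fun x => ‖u' x‖) ∧
      (⨆ x : ℝ, ‖u' x‖)
        ≤ (C₂ + 2 * Real.sqrt C₂) * ⨆ x : ℝ, ‖u x‖ := by
  set M := ⨆ x : ℝ, ‖u x‖ with hMdef
  have hMx : ∀ x, ‖u x‖ ≤ M := fun x => le_ciSup hbdd x
  have hVint : ∀ a b : ℝ, IntervalIntegrable V volume a b := fun a b =>
    (hVloc.integrableOn_isCompact isCompact_uIcc).intervalIntegrable
  have hC₁ub : ∀ x : ℝ, (∫ y in x..x + 1, max (-V y) 0) ≤ C₁ := fun x =>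
    hC₁.1 ⟨x, rfl⟩
  have claim : ∀ x₀ : ℝ, ‖u' x₀‖ ≤ (C₂ + 2 * Real.sqrt C₂) * M := by
    intro x₀
    rcases le_or_gt 0 (((starRingEnd ℂ) (u' x₀) * u x₀).re) with hcse | hcse
    · exact half V hVmeas hVint C₁ hC₁ub E u u' hu heq C₂ hC₂ hC₂pos M hMx x₀ hcse
    · -- reflect the problem at x₀
      set Vr : ℝ → ℝ := fun t => V (2 * x₀ - t) with hVrdef
      set ur : ℝ → ℂ := fun t => u (2 * x₀ - t) with hurdef
      set ur' : ℝ → ℂ := fun t => -u' (2 * x₀ - t) with hur'def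
      have hVrmeas : Measurable Vr := hVmeas.comp (measurable_const.sub measurable_id)
      have hVrint : ∀ a b : ℝ, IntervalIntegrable Vr volume a b := by
        intro a b
        have h := (hVint (2 * x₀ - a) (2 * x₀ - b)).comp_sub_left (2 * x₀)
        simpa using h
      have hC₁ubr : ∀ x : ℝ, (∫ y in x..x + 1, max (-Vr y) 0) ≤ C₁ := by
        intro x
        have h1 : (∫ y in x..x + 1, max (-Vr y) 0)
            = ∫ y in (2 * x₀ - (x + 1))..(2 * x₀ - x), max (-V y) 0 :=
          intervalIntegral.integral_comp_sub_left (fun y => max (-V y) 0) (2 * x₀)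
        rw [h1, show 2 * x₀ - x = (2 * x₀ - (x + 1)) + 1 by ring]
        exact hC₁ub _
      have hur : ∀ x : ℝ, HasDerivAt ur (ur' x) x := by
        intro x
        have h2 := (hu (2 * x₀ - x)).comp_const_sub (2 * x₀) x
        simpa [hurdef, hur'def] using h2
      have heqr : ∀ a b : ℝ, a ≤ b →
          ur' b - ur' a = ∫ t in a..b, ((Vr t : ℂ) - E) * ur t := by
        intro a b hab
        have h1 := heq (2 * x₀ - b) (2 * x₀ - a) (by linarith)
        have h2 : (∫ t in a..b, ((V (2 * x₀ - t) : ℂ) - E) * u (2 * x₀ - t))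
            = ∫ t in (2 * x₀ - b)..(2 * x₀ - a), ((V t : ℂ) - E) * u t :=
          intervalIntegral.integral_comp_sub_left (fun t => ((V t : ℂ) - E) * u t) (2 * x₀)
        show -u' (2 * x₀ - b) - -u' (2 * x₀ - a) = _
        rw [show -u' (2 * x₀ - b) - -u' (2 * x₀ - a)
            = u' (2 * x₀ - a) - u' (2 * x₀ - b) by ring, h1, ← h2]
      have hMr : ∀ x, ‖ur x‖ ≤ M := fun x => hMx _
      have hcr : 0 ≤ (((starRingEnd ℂ) (ur' x₀)) * ur x₀).re := by
        have h1 : ur' x₀ = -u' x₀ := by rw [hur'def]; simp [show 2 * x₀ - x₀ = x₀ by ring]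
        have h2 : ur x₀ = u x₀ := by rw [hurdef]; simp [show 2 * x₀ - x₀ = x₀ by ring]
        rw [h1, h2, map_neg, neg_mul, Complex.neg_re]
        linarith
      have h := half Vr hVrmeas hVrint C₁ hC₁ubr E ur ur' hur heqr C₂ hC₂ hC₂pos M hMr x₀ hcr
      have h3 : ur' x₀ = -u' x₀ := by rw [hur'def]; simp [show 2 * x₀ - x₀ = x₀ by ring]
      rw [h3, norm_neg] at h
      exact h
  constructor
  · exact ⟨(C₂ + 2 * Real.sqrt C₂) * M, by rintro y ⟨x, rfl⟩; exact claim x⟩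
  · exact ciSup_le claim
end
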